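/- arXiv:2301.13033 — 4 statements merged into one kernel-verified Lean document; each statement's English description precedes it below -/
import Mathlib

section
/- Let θ̂ be a random locally finite Borel measure on [0,∞). Suppose there exists α ∈ (0,1) such that limsup_{y→∞} E[ ( y^{-3} · ∫_{[0,y]} x e^{-√2·x} θ̂(dx) )^α ] < ∞. Then the family { λ^{3/2} · ∫_{[0,∞)} x e^{-√2·x} e^{-λx²} θ̂(dx) : λ ∈ (0,1) } of real random variables is tight. -/
open MeasureTheory Filter Set
open scoped ENNReal NNReal

noncomputable section

/-- Tightness of a family of real random variables. -/
def TightFamily {Ω ι : Type*} [MeasurableSpace Ω] (P : Measure Ω)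
    (X : ι → Ω → ℝ) : Prop :=
  ∀ ε > (0:ℝ), ∃ M : ℝ, ∀ i, P {ω | M < |X i ω|} ≤ ENNReal.ofReal ε


private lemma sum_rpow_le_aux (s : Finset ℕ) (f : ℕ → ℝ≥0∞) {p : ℝ} (hp : 0 < p) (hp1 : p ≤ 1) :
    (∑ i ∈ s, f i) ^ p ≤ ∑ i ∈ s, f i ^ p := by
  classical
  induction s using Finset.cons_induction with
  | empty => simp [ENNReal.zero_rpow_of_pos hp]
  | cons a s ha ih =>
      rw [Finset.sum_cons, Finset.sum_cons]
      exact le_trans (ENNReal.rpow_add_le_add_rpow _ _ hp.le hp1) (by gcongr)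

private lemma tsum_rpow_le_aux (f : ℕ → ℝ≥0∞) {p : ℝ} (hp : 0 < p) (hp1 : p ≤ 1) :
    (∑' n, f n) ^ p ≤ ∑' n, f n ^ p := by
  rw [← ENNReal.le_rpow_inv_iff hp]
  rw [ENNReal.tsum_eq_iSup_sum]
  refine iSup_le fun s => ?_
  rw [ENNReal.le_rpow_inv_iff hp]
  exact le_trans (sum_rpow_le_aux s f hp hp1) (ENNReal.sum_le_tsum s)

private def gfun : ℝ → ℝ := fun x => x * Real.exp (-(Real.sqrt 2) * x)

private lemma gfun_cont : Continuous gfun := by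
  unfold gfun; fun_prop

private lemma gfun_nonneg {x : ℝ} (hx : 0 ≤ x) : 0 ≤ gfun x :=
  mul_nonneg hx (Real.exp_pos _).le

private def Lfun (μ : Measure ℝ) (y : ℝ) : ℝ≥0∞ :=
  ∫⁻ x in Icc (0:ℝ) y, ENNReal.ofReal (gfun x) ∂μ

private lemma Lfun_mono (μ : Measure ℝ) {y z : ℝ} (h : y ≤ z) : Lfun μ y ≤ Lfun μ z :=
  lintegral_mono_set (Icc_subset_Icc_right h)

private lemma gE_meas : Measurable fun x : ℝ => ENNReal.ofReal (gfun x) :=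
  ENNReal.measurable_ofReal.comp gfun_cont.measurable

private lemma Lfun_meas {Ω : Type*} [MeasurableSpace Ω] (θ : Ω → Measure ℝ)
    (hmeas : Measurable θ) (y : ℝ) : Measurable fun ω => Lfun (θ ω) y := by
  have : ∀ ω, Lfun (θ ω) y
      = ∫⁻ x, (Icc (0:ℝ) y).indicator (fun x => ENNReal.ofReal (gfun x)) x ∂(θ ω) := by
    intro ω
    rw [lintegral_indicator measurableSet_Icc]
    rfl
  simp_rw [this]
  exact (Measure.measurable_lintegral (gE_meas.indicator measurableSet_Icc)).comp hmeas

private lemma Lfun_lt_top (μ : Measure ℝ) [IsLocallyFiniteMeasure μ] (y : ℝ) :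
    Lfun μ y < ⊤ := by
  obtain ⟨Cb, hCb⟩ := isCompact_Icc.exists_bound_of_continuousOn
    (gfun_cont.continuousOn (s := Icc (0:ℝ) y))
  calc Lfun μ y ≤ ∫⁻ _ in Icc (0:ℝ) y, ENNReal.ofReal Cb ∂μ := by
        refine lintegral_mono_ae ?_
        filter_upwards [ae_restrict_mem measurableSet_Icc] with x hx
        exact ENNReal.ofReal_le_ofReal (le_trans (le_abs_self _) (hCb x hx))
    _ = ENNReal.ofReal Cb * μ (Icc (0:ℝ) y) := setLIntegral_const _ _
    _ < ⊤ := ENNReal.mul_lt_top ENNReal.ofReal_lt_top measure_Icc_lt_top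

private lemma Lfun_integrable (μ : Measure ℝ) [IsLocallyFiniteMeasure μ] (y : ℝ) :
    IntegrableOn gfun (Icc (0:ℝ) y) μ :=
  gfun_cont.continuousOn.integrableOn_compact isCompact_Icc

private lemma Lfun_eq (μ : Measure ℝ) [IsLocallyFiniteMeasure μ] (y : ℝ) :
    ENNReal.ofReal (∫ x in Icc (0:ℝ) y, gfun x ∂μ) = Lfun μ y := by
  refine ofReal_integral_eq_lintegral_ofReal (Lfun_integrable μ y) ?_
  filter_upwards [ae_restrict_mem measurableSet_Icc] with x hx
  exact gfun_nonneg hx.1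

private lemma Lfun_eq' (μ : Measure ℝ) [IsLocallyFiniteMeasure μ] (y : ℝ) :
    ENNReal.ofReal (∫ x in Icc (0:ℝ) y, x * Real.exp (-(Real.sqrt 2) * x) ∂μ) = Lfun μ y :=
  Lfun_eq μ y



-- summability of the coefficient sequence
private lemma summable_q (Y : ℝ) {p : ℝ} (hp0 : 0 < p) (hp1 : p ≤ 1) (hY : 1 ≤ Y) :
    Summable (fun n : ℕ => (Real.exp (-(n:ℝ)^2) * (Y*((n:ℝ)+1))^3) ^ p) := by
  set r := Real.exp (-p) with hr
  have hr0 : 0 < r := Real.exp_pos _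
  have hr1 : r < 1 := Real.exp_lt_one_iff.2 (neg_neg_iff_pos.2 hp0)
  have h1 : Summable (fun n : ℕ => (n:ℝ)^3 * r^n) :=
    summable_pow_mul_geometric_of_norm_lt_one 3 (by rwa [Real.norm_eq_abs, abs_of_pos hr0])
  have h2 : Summable (fun n : ℕ => (((n+1:ℕ)):ℝ)^3 * r^(n+1)) :=
    h1.comp_injective (add_left_injective 1)
  have h3 := h2.mul_left r⁻¹
  have hbig : Summable (fun n : ℕ => Y^3 * (((n:ℝ)+1)^3 * r^n)) := by
    refine (h3.congr fun n => ?_).mul_left (Y^3)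
    push_cast
    rw [pow_succ]
    field_simp
    ring
  refine hbig.of_nonneg_of_le (fun n => Real.rpow_nonneg (by positivity) _) (fun n => ?_)
  have hb0 : (0:ℝ) ≤ (Y*((n:ℝ)+1))^3 := by positivity
  have hb1 : (1:ℝ) ≤ (Y*((n:ℝ)+1))^3 := by
    have : (1:ℝ) ≤ Y*((n:ℝ)+1) := by nlinarith [Nat.cast_nonneg (α := ℝ) n]
    exact one_le_pow₀ this
  have hexp : Real.exp (-(n:ℝ)^2) ^ p = Real.exp (-(n:ℝ)^2 * p) := by
    rw [Real.rpow_def_of_pos (Real.exp_pos _), Real.log_exp]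
  calc (Real.exp (-(n:ℝ)^2) * (Y*((n:ℝ)+1))^3) ^ p
      = Real.exp (-(n:ℝ)^2) ^ p * ((Y*((n:ℝ)+1))^3) ^ p :=
        Real.mul_rpow (Real.exp_nonneg _) hb0
    _ ≤ r^n * (Y*((n:ℝ)+1))^3 := by
        refine mul_le_mul ?_ ?_ (Real.rpow_nonneg hb0 _) (by positivity)
        · rw [hexp, hr, ← Real.exp_nat_mul]
          refine Real.exp_le_exp.2 ?_
          have : (n:ℝ) ≤ (n:ℝ)^2 := by exact_mod_cast Nat.le_self_pow two_ne_zero n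
          nlinarith
        · calc ((Y*((n:ℝ)+1))^3) ^ p ≤ ((Y*((n:ℝ)+1))^3) ^ (1:ℝ) :=
              Real.rpow_le_rpow_of_exponent_le hb1 hp1
            _ = (Y*((n:ℝ)+1))^3 := Real.rpow_one _
    _ = Y^3 * (((n:ℝ)+1)^3 * r^n) := by ring

-- pointwise bound on the Bochner integral
private lemma ofReal_X_le (μ : Measure ℝ) {lv : ℝ} (hlv : 0 < lv) :
    ENNReal.ofReal |lv ^ ((3:ℝ)/2) *
        ∫ x in Ici (0:ℝ), x * Real.exp (-(Real.sqrt 2) * x) * Real.exp (-lv * x^2) ∂μ|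
      ≤ ENNReal.ofReal (lv ^ ((3:ℝ)/2)) *
        ∫⁻ x in Ici (0:ℝ),
          ENNReal.ofReal (x * Real.exp (-(Real.sqrt 2) * x) * Real.exp (-lv * x^2)) ∂μ := by
  set f : ℝ → ℝ := fun x => x * Real.exp (-(Real.sqrt 2) * x) * Real.exp (-lv * x^2) with hf
  have hf0 : ∀ x ∈ Ici (0:ℝ), 0 ≤ f x := fun x hx => mul_nonneg (gfun_nonneg hx) (Real.exp_pos _).le
  have hI0 : 0 ≤ ∫ x in Ici (0:ℝ), f x ∂μ := setIntegral_nonneg measurableSet_Ici hf0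
  rw [abs_mul, abs_of_nonneg (Real.rpow_nonneg hlv.le _), abs_of_nonneg hI0,
    ENNReal.ofReal_mul (Real.rpow_nonneg hlv.le _)]
  refine mul_le_mul_right ?_ _
  by_cases hint : IntegrableOn f (Ici (0:ℝ)) μ
  · rw [ofReal_integral_eq_lintegral_ofReal hint ?_]
    · filter_upwards [ae_restrict_mem measurableSet_Ici] with x hx
      exact hf0 x hx
  · rw [integral_undef hint]
    simp

-- slicing estimate
private lemma G_le_sum (μ : Measure ℝ) {lv : ℝ} (hlv0 : 0 < lv) (hlv1 : lv < 1) :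
    ∫⁻ x in Ici (0:ℝ),
        ENNReal.ofReal (x * Real.exp (-(Real.sqrt 2) * x) * Real.exp (-lv * x^2)) ∂μ
      ≤ ∑' n : ℕ, ENNReal.ofReal (Real.exp (-(n:ℝ)^2)) *
          Lfun μ (((n:ℝ)+1) * (Real.sqrt lv)⁻¹) := by
  set s : ℝ := (Real.sqrt lv)⁻¹ with hs
  have hsqrt : 0 < Real.sqrt lv := Real.sqrt_pos.2 hlv0
  have hs0 : 0 < s := inv_pos.2 hsqrt
  have hs2 : lv * s^2 = 1 := by
    rw [hs, ← Real.sqrt_inv]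
    rw [Real.sq_sqrt (by positivity)]
    field_simp
  have hsub : Ici (0:ℝ) ⊆ ⋃ n : ℕ, Ico ((n:ℝ)*s) (((n:ℝ)+1)*s) := by
    intro x hx
    refine mem_iUnion.2 ⟨⌊x / s⌋₊, ?_, ?_⟩
    · calc ((⌊x/s⌋₊ : ℝ)) * s ≤ (x/s) * s :=
          mul_le_mul_of_nonneg_right (Nat.floor_le (div_nonneg hx hs0.le)) hs0.le
        _ = x := div_mul_cancel₀ x hs0.ne'
    · have h := Nat.lt_floor_add_one (x/s)
      calc x = (x/s) * s := (div_mul_cancel₀ x hs0.ne').symm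
        _ < ((⌊x/s⌋₊ : ℝ) + 1) * s := by
            exact mul_lt_mul_of_pos_right h hs0
  calc ∫⁻ x in Ici (0:ℝ),
        ENNReal.ofReal (x * Real.exp (-(Real.sqrt 2) * x) * Real.exp (-lv * x^2)) ∂μ
      ≤ ∫⁻ x in ⋃ n : ℕ, Ico ((n:ℝ)*s) (((n:ℝ)+1)*s),
        ENNReal.ofReal (x * Real.exp (-(Real.sqrt 2) * x) * Real.exp (-lv * x^2)) ∂μ :=
        lintegral_mono_set hsub
    _ ≤ ∑' n : ℕ, ∫⁻ x in Ico ((n:ℝ)*s) (((n:ℝ)+1)*s),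
        ENNReal.ofReal (x * Real.exp (-(Real.sqrt 2) * x) * Real.exp (-lv * x^2)) ∂μ :=
        lintegral_iUnion_le _ _
    _ ≤ ∑' n : ℕ, ENNReal.ofReal (Real.exp (-(n:ℝ)^2)) * Lfun μ (((n:ℝ)+1)*s) := by
        refine ENNReal.tsum_le_tsum fun n => ?_
        have hns0 : (0:ℝ) ≤ (n:ℝ)*s := mul_nonneg n.cast_nonneg hs0.le
        calc ∫⁻ x in Ico ((n:ℝ)*s) (((n:ℝ)+1)*s),
              ENNReal.ofReal (x * Real.exp (-(Real.sqrt 2) * x) * Real.exp (-lv * x^2)) ∂μ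
            ≤ ∫⁻ x in Ico ((n:ℝ)*s) (((n:ℝ)+1)*s),
              ENNReal.ofReal (Real.exp (-(n:ℝ)^2)) * ENNReal.ofReal (gfun x) ∂μ := by
              refine lintegral_mono_ae ?_
              filter_upwards [ae_restrict_mem measurableSet_Ico] with x hx
              have hx0 : 0 ≤ x := le_trans hns0 hx.1
              rw [← ENNReal.ofReal_mul (Real.exp_pos _).le]
              refine ENNReal.ofReal_le_ofReal ?_
              have hee : Real.exp (-lv * x^2) ≤ Real.exp (-(n:ℝ)^2) := by
                refine Real.exp_le_exp.2 ?_
                have hxx : ((n:ℝ)*s)^2 ≤ x^2 := by nlinarith [hx.1]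
                nlinarith [hlv0.le]
              calc x * Real.exp (-(Real.sqrt 2) * x) * Real.exp (-lv * x^2)
                  ≤ x * Real.exp (-(Real.sqrt 2) * x) * Real.exp (-(n:ℝ)^2) :=
                    mul_le_mul_of_nonneg_left hee (gfun_nonneg hx0)
                _ = Real.exp (-(n:ℝ)^2) * gfun x := by rw [mul_comm]; rfl
          _ = ENNReal.ofReal (Real.exp (-(n:ℝ)^2)) *
              ∫⁻ x in Ico ((n:ℝ)*s) (((n:ℝ)+1)*s), ENNReal.ofReal (gfun x) ∂μ :=
              lintegral_const_mul _ gE_meas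
          _ ≤ ENNReal.ofReal (Real.exp (-(n:ℝ)^2)) * Lfun μ (((n:ℝ)+1)*s) := by
              refine mul_le_mul_right (lintegral_mono_set fun x hx => ?_) _
              exact ⟨le_trans hns0 hx.1, hx.2.le⟩


private lemma G_meas {Ω : Type*} [MeasurableSpace Ω] (θ : Ω → Measure ℝ)
    (hmeas : Measurable θ) (lv : ℝ) :
    Measurable fun ω => ∫⁻ x in Ici (0:ℝ),
      ENNReal.ofReal (x * Real.exp (-(Real.sqrt 2) * x) * Real.exp (-lv * x^2)) ∂(θ ω) := by
  have hfm : Measurable fun x : ℝ =>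
      ENNReal.ofReal (x * Real.exp (-(Real.sqrt 2) * x) * Real.exp (-lv * x^2)) := by
    refine ENNReal.measurable_ofReal.comp ?_
    fun_prop
  have h : ∀ ω, (∫⁻ x in Ici (0:ℝ),
      ENNReal.ofReal (x * Real.exp (-(Real.sqrt 2) * x) * Real.exp (-lv * x^2)) ∂(θ ω))
      = ∫⁻ x, (Ici (0:ℝ)).indicator
        (fun x => ENNReal.ofReal (x * Real.exp (-(Real.sqrt 2) * x) * Real.exp (-lv * x^2))) x
        ∂(θ ω) := by
    intro ω
    rw [lintegral_indicator measurableSet_Ici]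
  simp_rw [h]
  exact (Measure.measurable_lintegral (hfm.indicator measurableSet_Ici)).comp hmeas

/-- A fractional moment bound on `y⁻³ ∫_{[0,y]} x e^{-√2 x} θ̂(dx)` implies tightness of
`λ^{3/2} ∫_{[0,∞)} x e^{-√2 x} e^{-λx²} θ̂(dx)` for `λ ∈ (0,1)`. -/
theorem tightness_from_fractional_moment
    {Ω : Type*} [MeasurableSpace Ω] (P : Measure Ω) [IsProbabilityMeasure P]
    (θ : Ω → Measure ℝ) (hmeas : Measurable θ)
    (hloc : ∀ ω, IsLocallyFiniteMeasure (θ ω))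
    (hsupp : ∀ ω, θ ω (Set.Iio 0) = 0)
    (α : ℝ) (hα : α ∈ Set.Ioo (0:ℝ) 1)
    (hmom : Filter.limsup
      (fun y : ℝ => ∫⁻ ω, ENNReal.ofReal
        ((y ^ (-(3:ℝ)) *
          ∫ x in Set.Icc (0:ℝ) y, x * Real.exp (-(Real.sqrt 2) * x) ∂(θ ω)) ^ α) ∂P)
      atTop < ⊤) :
    TightFamily P (fun l : Set.Ioo (0:ℝ) 1 => fun ω =>
      (l : ℝ) ^ ((3:ℝ)/2) * ∫ x in Set.Ici (0:ℝ),
        x * Real.exp (-(Real.sqrt 2) * x) * Real.exp (-(l:ℝ) * x ^ 2) ∂(θ ω)) := by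
  obtain ⟨hα0, hα1⟩ := hα
  classical
  set C : ℝ≥0∞ := Filter.limsup
      (fun y : ℝ => ∫⁻ ω, ENNReal.ofReal
        ((y ^ (-(3:ℝ)) *
          ∫ x in Set.Icc (0:ℝ) y, x * Real.exp (-(Real.sqrt 2) * x) ∂(θ ω)) ^ α) ∂P)
      atTop + 1 with hCdef
  have hCne : C ≠ ⊤ := ENNReal.add_ne_top.2 ⟨hmom.ne, ENNReal.one_ne_top⟩
  have hev := Filter.eventually_lt_of_limsup_lt (ENNReal.lt_add_right hmom.ne one_ne_zero)
  obtain ⟨Y₀, hY₀⟩ := Filter.eventually_atTop.1 hev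
  set Y : ℝ := max Y₀ 1 with hYdef
  have hY1 : (1:ℝ) ≤ Y := le_max_right _ _
  have hYpos : (0:ℝ) < Y := lt_of_lt_of_le one_pos hY1
  -- Key bound from the moment hypothesis
  have KB : ∀ y : ℝ, Y ≤ y →
      ∫⁻ ω, (Lfun (θ ω) y) ^ α ∂P ≤ ENNReal.ofReal y ^ (3*α) * C := by
    intro y hy
    have hy0 : (0:ℝ) < y := lt_of_lt_of_le one_pos (hY1.trans hy)
    have hOy0 : ENNReal.ofReal y ≠ 0 := ne_of_gt (ENNReal.ofReal_pos.2 hy0)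
    have hLmeasα : Measurable fun ω => (Lfun (θ ω) y) ^ α :=
      (ENNReal.continuous_rpow_const.measurable).comp (Lfun_meas θ hmeas y)
    have key : ENNReal.ofReal y ^ (-(3*α)) * ∫⁻ ω, (Lfun (θ ω) y) ^ α ∂P ≤ C := by
      rw [← lintegral_const_mul _ hLmeasα]
      refine le_trans (le_of_eq (lintegral_congr fun ω => ?_))
        (hY₀ y (le_trans (le_max_left _ _) hy)).le
      haveI := hloc ω
      have hB : (0:ℝ) ≤ ∫ x in Set.Icc (0:ℝ) y, x * Real.exp (-(Real.sqrt 2) * x) ∂(θ ω) :=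
        setIntegral_nonneg measurableSet_Icc fun x hx => gfun_nonneg hx.1
      have hy3 : (0:ℝ) ≤ y ^ (-(3:ℝ)) := Real.rpow_nonneg hy0.le _
      rw [← ENNReal.ofReal_rpow_of_nonneg (mul_nonneg hy3 hB) hα0.le,
        ENNReal.ofReal_mul hy3, ENNReal.mul_rpow_of_nonneg _ _ hα0.le,
        ← ENNReal.ofReal_rpow_of_pos hy0, ← ENNReal.rpow_mul,
        Lfun_eq' (θ ω) y, neg_mul]
    have hexp : (3*α) + (-(3*α)) = 0 := by ring
    calc ∫⁻ ω, (Lfun (θ ω) y) ^ α ∂P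
        = ENNReal.ofReal y ^ (3*α) *
            (ENNReal.ofReal y ^ (-(3*α)) * ∫⁻ ω, (Lfun (θ ω) y) ^ α ∂P) := by
          rw [← mul_assoc, ← ENNReal.rpow_add _ _ hOy0 ENNReal.ofReal_ne_top, hexp,
            ENNReal.rpow_zero, one_mul]
      _ ≤ ENNReal.ofReal y ^ (3*α) * C := mul_le_mul_right key _
  -- coefficients
  set q : ℕ → ℝ := fun n => (Real.exp (-(n:ℝ)^2) * (Y*((n:ℝ)+1))^3) ^ α with hq
  have hq0 : ∀ n, 0 ≤ q n := fun n => Real.rpow_nonneg (by positivity) _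
  have hqs : Summable q := summable_q Y hα0 hα1.le hY1
  set K : ℝ≥0∞ := ENNReal.ofReal (∑' n, q n) * C with hK
  have hKne : K ≠ ⊤ := ENNReal.mul_ne_top ENNReal.ofReal_ne_top hCne
  -- main estimate, uniform in lv
  have main : ∀ lv : ℝ, 0 < lv → lv < 1 →
      ∫⁻ ω, (ENNReal.ofReal (lv ^ ((3:ℝ)/2)) *
        ∫⁻ x in Set.Ici (0:ℝ),
          ENNReal.ofReal (x * Real.exp (-(Real.sqrt 2) * x) * Real.exp (-lv * x^2))
          ∂(θ ω)) ^ α ∂P ≤ K := by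
    intro lv hlv0 hlv1
    set s : ℝ := (Real.sqrt lv)⁻¹ with hs
    have hsqrt : 0 < Real.sqrt lv := Real.sqrt_pos.2 hlv0
    have hsqrt1 : Real.sqrt lv ≤ 1 := by
      rw [show (1:ℝ) = Real.sqrt 1 from (Real.sqrt_one).symm]
      exact Real.sqrt_le_sqrt hlv1.le
    have hs0 : 0 < s := inv_pos.2 hsqrt
    have hs1 : 1 ≤ s := by
      have h := mul_pos hs0 hsqrt
      have hids : s * Real.sqrt lv = 1 := inv_mul_cancel₀ hsqrt.ne'
      nlinarith
    have hcube : lv ^ ((3:ℝ)/2) * s^3 = 1 := by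
      have h1 : lv ^ ((3:ℝ)/2) = (Real.sqrt lv)^(3:ℕ) := by
        rw [Real.sqrt_eq_rpow, ← Real.rpow_natCast (lv ^ ((1:ℝ)/2)) 3,
          ← Real.rpow_mul hlv0.le]
        norm_num
      rw [h1, hs, ← mul_pow, mul_inv_cancel₀ hsqrt.ne', one_pow]
    have hc32 : (0:ℝ) ≤ lv ^ ((3:ℝ)/2) := Real.rpow_nonneg hlv0.le _
    have hptw : ∀ ω, (ENNReal.ofReal (lv ^ ((3:ℝ)/2)) *
        ∫⁻ x in Set.Ici (0:ℝ),
          ENNReal.ofReal (x * Real.exp (-(Real.sqrt 2) * x) * Real.exp (-lv * x^2))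
          ∂(θ ω)) ^ α
        ≤ ∑' n : ℕ, (ENNReal.ofReal (lv ^ ((3:ℝ)/2)) *
            (ENNReal.ofReal (Real.exp (-(n:ℝ)^2)) * Lfun (θ ω) (((n:ℝ)+1)*s))) ^ α := by
      intro ω
      refine le_trans (ENNReal.rpow_le_rpow ?_ hα0.le) (tsum_rpow_le_aux _ hα0 hα1.le)
      calc ENNReal.ofReal (lv ^ ((3:ℝ)/2)) *
            ∫⁻ x in Set.Ici (0:ℝ),
              ENNReal.ofReal (x * Real.exp (-(Real.sqrt 2) * x) * Real.exp (-lv * x^2))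
              ∂(θ ω)
          ≤ ENNReal.ofReal (lv ^ ((3:ℝ)/2)) *
            ∑' n : ℕ, ENNReal.ofReal (Real.exp (-(n:ℝ)^2)) * Lfun (θ ω) (((n:ℝ)+1)*s) :=
            mul_le_mul_right (G_le_sum (θ ω) hlv0 hlv1) _
        _ = ∑' n : ℕ, ENNReal.ofReal (lv ^ ((3:ℝ)/2)) *
            (ENNReal.ofReal (Real.exp (-(n:ℝ)^2)) * Lfun (θ ω) (((n:ℝ)+1)*s)) :=
            ENNReal.tsum_mul_left.symm
    have hn : ∀ n : ℕ, ∫⁻ ω, (ENNReal.ofReal (lv ^ ((3:ℝ)/2)) *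
        (ENNReal.ofReal (Real.exp (-(n:ℝ)^2)) * Lfun (θ ω) (((n:ℝ)+1)*s))) ^ α ∂P
        ≤ ENNReal.ofReal (q n) * C := by
      intro n
      have hn1s : (1:ℝ) ≤ ((n:ℝ)+1)*s := by nlinarith [Nat.cast_nonneg (α := ℝ) n]
      have hw0 : (0:ℝ) < Y*(((n:ℝ)+1)*s) := by nlinarith
      have hYw : Y ≤ Y*(((n:ℝ)+1)*s) := le_mul_of_one_le_right hYpos.le hn1s
      have hmeasL : Measurable fun ω => (Lfun (θ ω) (((n:ℝ)+1)*s)) ^ α :=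
        (ENNReal.continuous_rpow_const.measurable).comp (Lfun_meas θ hmeas _)
      calc ∫⁻ ω, (ENNReal.ofReal (lv ^ ((3:ℝ)/2)) *
            (ENNReal.ofReal (Real.exp (-(n:ℝ)^2)) * Lfun (θ ω) (((n:ℝ)+1)*s))) ^ α ∂P
          = (ENNReal.ofReal (lv ^ ((3:ℝ)/2)) * ENNReal.ofReal (Real.exp (-(n:ℝ)^2))) ^ α *
            ∫⁻ ω, (Lfun (θ ω) (((n:ℝ)+1)*s)) ^ α ∂P := by
            simp_rw [← mul_assoc, ENNReal.mul_rpow_of_nonneg _ _ hα0.le]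
            exact lintegral_const_mul _ hmeasL
        _ ≤ (ENNReal.ofReal (lv ^ ((3:ℝ)/2)) * ENNReal.ofReal (Real.exp (-(n:ℝ)^2))) ^ α *
            (ENNReal.ofReal (Y*(((n:ℝ)+1)*s)) ^ (3*α) * C) := by
            refine mul_le_mul_right (le_trans (lintegral_mono fun ω =>
              ENNReal.rpow_le_rpow (Lfun_mono _ (le_mul_of_one_le_left (by positivity) hY1))
                hα0.le) (KB _ hYw)) _
        _ = ENNReal.ofReal (q n) * C := by
            rw [← mul_assoc]
            congr 1
            rw [ENNReal.rpow_mul, ← ENNReal.mul_rpow_of_nonneg _ _ hα0.le,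
              ENNReal.ofReal_rpow_of_pos hw0,
              ← ENNReal.ofReal_mul hc32, ← ENNReal.ofReal_mul (by positivity),
              ENNReal.ofReal_rpow_of_nonneg (by positivity) hα0.le]
            congr 1
            have hw3 : (Y*(((n:ℝ)+1)*s)) ^ (3:ℝ) = (Y*(((n:ℝ)+1)*s))^(3:ℕ) := by
              rw [← Real.rpow_natCast (Y*(((n:ℝ)+1)*s)) 3]
              norm_num
            rw [hq, hw3]
            have : (Y*(((n:ℝ)+1)*s))^(3:ℕ) = (Y*((n:ℝ)+1))^3 * s^3 := by ring
            rw [this]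
            congr 1
            linear_combination (Real.exp (-(n:ℝ)^2) * (Y*((n:ℝ)+1))^3) * hcube
    have hmeasn : ∀ n : ℕ, Measurable fun ω => (ENNReal.ofReal (lv ^ ((3:ℝ)/2)) *
        (ENNReal.ofReal (Real.exp (-(n:ℝ)^2)) * Lfun (θ ω) (((n:ℝ)+1)*s))) ^ α := fun n =>
      (ENNReal.continuous_rpow_const.measurable).comp
        (((Lfun_meas θ hmeas _).const_mul _).const_mul _)
    calc ∫⁻ ω, (ENNReal.ofReal (lv ^ ((3:ℝ)/2)) *
          ∫⁻ x in Set.Ici (0:ℝ),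
            ENNReal.ofReal (x * Real.exp (-(Real.sqrt 2) * x) * Real.exp (-lv * x^2))
            ∂(θ ω)) ^ α ∂P
        ≤ ∫⁻ ω, ∑' n : ℕ, (ENNReal.ofReal (lv ^ ((3:ℝ)/2)) *
            (ENNReal.ofReal (Real.exp (-(n:ℝ)^2)) * Lfun (θ ω) (((n:ℝ)+1)*s))) ^ α ∂P :=
          lintegral_mono hptw
      _ = ∑' n : ℕ, ∫⁻ ω, (ENNReal.ofReal (lv ^ ((3:ℝ)/2)) *
            (ENNReal.ofReal (Real.exp (-(n:ℝ)^2)) * Lfun (θ ω) (((n:ℝ)+1)*s))) ^ α ∂P :=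
          lintegral_tsum fun n => (hmeasn n).aemeasurable
      _ ≤ ∑' n : ℕ, ENNReal.ofReal (q n) * C := ENNReal.tsum_le_tsum hn
      _ = (∑' n : ℕ, ENNReal.ofReal (q n)) * C := ENNReal.tsum_mul_right
      _ = K := by rw [hK, ENNReal.ofReal_tsum_of_nonneg hq0 hqs]
  -- conclude tightness
  intro ε hε
  have hεne : ENNReal.ofReal ε ≠ 0 := ne_of_gt (ENNReal.ofReal_pos.2 hε)
  set R : ℝ := (K / ENNReal.ofReal ε).toReal with hR
  have hR0 : 0 ≤ R := ENNReal.toReal_nonneg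
  set M : ℝ := (R+1) ^ (α⁻¹) with hM
  have hM0 : 0 < M := Real.rpow_pos_of_pos (by linarith) _
  have hMα : ENNReal.ofReal M ^ α = ENNReal.ofReal (R+1) := by
    rw [ENNReal.ofReal_rpow_of_nonneg hM0.le hα0.le]
    congr 1
    rw [hM, ← Real.rpow_mul (by linarith), inv_mul_cancel₀ hα0.ne', Real.rpow_one]
  have hMane : ENNReal.ofReal M ^ α ≠ 0 := by
    rw [hMα]; exact ne_of_gt (ENNReal.ofReal_pos.2 (by linarith))
  have hMatop : ENNReal.ofReal M ^ α ≠ ⊤ := by rw [hMα]; exact ENNReal.ofReal_ne_top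
  have hdiv : K / ENNReal.ofReal M ^ α ≤ ENNReal.ofReal ε := by
    rw [hMα, ENNReal.div_le_iff (ne_of_gt (ENNReal.ofReal_pos.2 (by linarith)))
      ENNReal.ofReal_ne_top]
    calc K = (K / ENNReal.ofReal ε) * ENNReal.ofReal ε :=
          (ENNReal.div_mul_cancel hεne ENNReal.ofReal_ne_top).symm
      _ = ENNReal.ofReal R * ENNReal.ofReal ε := by
          rw [hR, ENNReal.ofReal_toReal (ENNReal.div_lt_top hKne hεne).ne]
      _ ≤ ENNReal.ofReal ε * ENNReal.ofReal (R+1) := by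
          rw [mul_comm]
          exact mul_le_mul_right (ENNReal.ofReal_le_ofReal (by linarith)) _
  refine ⟨M, fun i => ?_⟩
  obtain ⟨hl0, hl1⟩ := i.2
  have hGmeas := G_meas θ hmeas (i : ℝ)
  have hHmeas : Measurable fun ω => (ENNReal.ofReal ((i:ℝ) ^ ((3:ℝ)/2)) *
      ∫⁻ x in Set.Ici (0:ℝ),
        ENNReal.ofReal (x * Real.exp (-(Real.sqrt 2) * x) * Real.exp (-(i:ℝ) * x^2))
        ∂(θ ω)) ^ α :=
    (ENNReal.continuous_rpow_const.measurable).comp (hGmeas.const_mul _)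
  have hsubset : {ω | M < |(i:ℝ) ^ ((3:ℝ)/2) * ∫ x in Set.Ici (0:ℝ),
      x * Real.exp (-(Real.sqrt 2) * x) * Real.exp (-(i:ℝ) * x ^ 2) ∂(θ ω)|}
      ⊆ {ω | ENNReal.ofReal M ^ α ≤ (ENNReal.ofReal ((i:ℝ) ^ ((3:ℝ)/2)) *
        ∫⁻ x in Set.Ici (0:ℝ),
          ENNReal.ofReal (x * Real.exp (-(Real.sqrt 2) * x) * Real.exp (-(i:ℝ) * x^2))
          ∂(θ ω)) ^ α} := by
    intro ω hω
    have h1 : ENNReal.ofReal M ≤ ENNReal.ofReal |(i:ℝ) ^ ((3:ℝ)/2) * ∫ x in Set.Ici (0:ℝ),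
        x * Real.exp (-(Real.sqrt 2) * x) * Real.exp (-(i:ℝ) * x ^ 2) ∂(θ ω)| :=
      ENNReal.ofReal_le_ofReal (le_of_lt hω)
    exact ENNReal.rpow_le_rpow (h1.trans (ofReal_X_le (θ ω) hl0)) hα0.le
  calc P {ω | M < |(i:ℝ) ^ ((3:ℝ)/2) * ∫ x in Set.Ici (0:ℝ),
        x * Real.exp (-(Real.sqrt 2) * x) * Real.exp (-(i:ℝ) * x ^ 2) ∂(θ ω)|}
      ≤ P {ω | ENNReal.ofReal M ^ α ≤ (ENNReal.ofReal ((i:ℝ) ^ ((3:ℝ)/2)) *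
        ∫⁻ x in Set.Ici (0:ℝ),
          ENNReal.ofReal (x * Real.exp (-(Real.sqrt 2) * x) * Real.exp (-(i:ℝ) * x^2))
          ∂(θ ω)) ^ α} := measure_mono hsubset
    _ ≤ K / ENNReal.ofReal M ^ α := by
        rw [ENNReal.le_div_iff_mul_le (Or.inl hMane) (Or.inl hMatop), mul_comm]
        exact (mul_meas_ge_le_lintegral₀ hHmeas.aemeasurable _).trans (main (i:ℝ) hl0 hl1)
    _ ≤ ENNReal.ofReal ε := hdiv

end
end

section
/- Let β be a random locally finite Borel measure on [0,∞) such that the family { λ^{3/2} · ∫_{[0,∞)} √x · e^{-λx} β(dx) : λ ∈ (0,1) } of real random variables is tight. Then: (a) for every α > 1 the family { (log(1/λ))^α · λ^{3/2} · ∫_{[0,∞)} e^{-λx} β(dx) : λ ∈ (0, 1/e) } is tight; (b) consequently, log(1/λ) · λ^{3/2} · ∫_{[0,∞)} e^{-λx} β(dx) → 0 in probability as λ → 0+. -/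
open MeasureTheory Filter Set
open scoped ENNReal NNReal Topology

noncomputable section

/-- Convergence in probability of a family of real random variables to a constant,
along a filter on the index set. -/
def ConvInProb {Ω ι : Type*} [MeasurableSpace Ω] (P : Measure Ω) (l : Filter ι)
    (X : ι → Ω → ℝ) (c : ℝ) : Prop :=
  ∀ ε > (0:ℝ), Tendsto (fun i => P {ω | ε < |X i ω - c|}) l (nhds 0)

namespace LogGainAux

lemma contG (l : ℝ) : Continuous fun x : ℝ => Real.exp (-l * x) :=
  Real.continuous_exp.comp (continuous_const.mul continuous_id)

lemma contF (l : ℝ) : Continuous fun x : ℝ => Real.sqrt x * Real.exp (-l * x) :=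
  Real.continuous_sqrt.mul (contG l)

/-- The Laplace transform as a lower integral. -/
def Gi {Ω : Type*} [MeasurableSpace Ω] (β : Ω → Measure ℝ) (l : ℝ) (ω : Ω) : ℝ≥0∞ :=
  ∫⁻ x in Set.Ici (0:ℝ), ENNReal.ofReal (Real.exp (-l * x)) ∂β ω

/-- The `√x`-weighted Laplace transform as a lower integral. -/
def Fi {Ω : Type*} [MeasurableSpace Ω] (β : Ω → Measure ℝ) (l : ℝ) (ω : Ω) : ℝ≥0∞ :=
  ∫⁻ x in Set.Ici (0:ℝ), ENNReal.ofReal (Real.sqrt x * Real.exp (-l * x)) ∂β ω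

variable {Ω : Type*} [MeasurableSpace Ω] {β : Ω → Measure ℝ}

lemma integral_G_eq (l : ℝ) (ω : Ω) :
    ∫ x in Set.Ici (0:ℝ), Real.exp (-l * x) ∂β ω = (Gi β l ω).toReal := by
  rw [Gi, integral_eq_lintegral_of_nonneg_ae (ae_of_all _ fun x => (Real.exp_pos _).le)
    ((contG l).aestronglyMeasurable)]

lemma integral_F_eq (l : ℝ) (ω : Ω) :
    ∫ x in Set.Ici (0:ℝ), Real.sqrt x * Real.exp (-l * x) ∂β ω = (Fi β l ω).toReal := by
  rw [Fi, integral_eq_lintegral_of_nonneg_ae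
    (ae_of_all _ fun x => mul_nonneg (Real.sqrt_nonneg _) (Real.exp_pos _).le)
    ((contF l).aestronglyMeasurable)]

lemma measurable_Gi (hmeas : Measurable β) (l : ℝ) : Measurable fun ω => Gi β l ω := by
  have : ∀ ω, Gi β l ω
      = ∫⁻ x, (Set.Ici (0:ℝ)).indicator (fun x => ENNReal.ofReal (Real.exp (-l * x))) x ∂β ω := by
    intro ω
    rw [Gi, lintegral_indicator measurableSet_Ici]
  simp only [this]
  exact (Measure.measurable_lintegral
    (((contG l).measurable.ennreal_ofReal).indicator measurableSet_Ici)).comp hmeas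

lemma measurable_Fi (hmeas : Measurable β) (l : ℝ) : Measurable fun ω => Fi β l ω := by
  have : ∀ ω, Fi β l ω
      = ∫⁻ x, (Set.Ici (0:ℝ)).indicator
          (fun x => ENNReal.ofReal (Real.sqrt x * Real.exp (-l * x))) x ∂β ω := by
    intro ω
    rw [Fi, lintegral_indicator measurableSet_Ici]
  simp only [this]
  exact (Measure.measurable_lintegral
    (((contF l).measurable.ennreal_ofReal).indicator measurableSet_Ici)).comp hmeas

/-- If the Laplace transform at `l` is finite, the `√x`-weighted one at any `ν > l` is finite. -/
lemma Fi_lt_top {l ν : ℝ} (hl : 0 < l) (hν : l < ν) {ω : Ω} (hG : Gi β l ω < ⊤) :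
    Fi β ν ω < ⊤ := by
  set d : ℝ := ν - l with hd
  have hd0 : 0 < d := by simp [hd]; linarith
  have hc0 : (0:ℝ) ≤ 1 + 1/d := by positivity
  have hFle : Fi β ν ω ≤ ENNReal.ofReal (1 + 1/d) * Gi β l ω := by
    rw [Fi, Gi, ← lintegral_const_mul' _ _ ENNReal.ofReal_ne_top]
    refine lintegral_mono_ae ((ae_restrict_iff' measurableSet_Ici).2 (ae_of_all _ fun x hx => ?_))
    rw [← ENNReal.ofReal_mul hc0]
    apply ENNReal.ofReal_le_ofReal
    have hx0 : (0:ℝ) ≤ x := hx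
    have h1 : Real.sqrt x ≤ 1 + x := by
      rw [Real.sqrt_le_left (by linarith)]
      nlinarith
    have h2 : Real.exp (-ν * x) = Real.exp (-d * x) * Real.exp (-l * x) := by
      rw [← Real.exp_add, hd]; ring_nf
    have h3 : Real.exp (-d * x) ≤ 1 := Real.exp_le_one_iff.2 (by nlinarith)
    have h4 : x * Real.exp (-d * x) ≤ 1/d := by
      have ht : d * x ≤ Real.exp (d * x) := by
        have := Real.add_one_le_exp (d * x); linarith
      have h5 : d * x * Real.exp (-(d*x)) ≤ 1 := by
        calc d * x * Real.exp (-(d*x)) ≤ Real.exp (d*x) * Real.exp (-(d*x)) :=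
              mul_le_mul_of_nonneg_right ht (Real.exp_pos _).le
          _ = 1 := by rw [← Real.exp_add]; simp
      rw [le_div_iff₀ hd0, show -d * x = -(d*x) by ring]
      calc x * Real.exp (-(d*x)) * d = d * x * Real.exp (-(d*x)) := by ring
        _ ≤ 1 := h5
    calc Real.sqrt x * Real.exp (-ν * x) ≤ (1 + x) * (Real.exp (-d * x) * Real.exp (-l * x)) := by
          rw [← h2]; exact mul_le_mul_of_nonneg_right h1 (Real.exp_pos _).le
      _ = (Real.exp (-d*x) + x * Real.exp (-d*x)) * Real.exp (-l * x) := by ring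
      _ ≤ (1 + 1/d) * Real.exp (-l * x) :=
          mul_le_mul_of_nonneg_right (add_le_add h3 h4) (Real.exp_pos _).le
  exact lt_of_le_of_lt hFle (ENNReal.mul_lt_top ENNReal.ofReal_lt_top hG)

/-- The key pointwise comparison. -/
lemma pointwise_bound {ν μ : ℝ} (hν0 : 0 < ν) (hνμ : ν ≤ μ) {x : ℝ} (hx : (0:ℝ) ≤ x) :
    ENNReal.ofReal (Real.exp (-ν * x)) ≤
      (Set.Iio (1:ℝ)).indicator (fun _ => (1:ℝ≥0∞)) x
      + ENNReal.ofReal (Real.exp 1) * ENNReal.ofReal (Real.sqrt x * Real.exp (-μ * x))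
      + ENNReal.ofReal (Real.sqrt μ) * ENNReal.ofReal (Real.sqrt x * Real.exp (-ν * x)) := by
  have hμ0 : 0 < μ := lt_of_lt_of_le hν0 hνμ
  rcases lt_or_ge x 1 with hx1 | hx1
  · have h1 : ENNReal.ofReal (Real.exp (-ν * x)) ≤ (Set.Iio (1:ℝ)).indicator (fun _ => (1:ℝ≥0∞)) x := by
      rw [Set.indicator_of_mem (show x ∈ Set.Iio (1:ℝ) from hx1)]
      exact ENNReal.ofReal_le_one.2 (Real.exp_le_one_iff.2 (by nlinarith))
    calc ENNReal.ofReal (Real.exp (-ν * x)) ≤ _ := h1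
      _ ≤ _ := by exact le_add_right (le_add_right le_rfl)
  · have hsx : (1:ℝ) ≤ Real.sqrt x := by
      rw [Real.le_sqrt' one_pos]; nlinarith
    rcases le_or_gt (μ * x) 1 with hμx | hμx
    · have hr : Real.exp (-ν * x) ≤ Real.exp 1 * (Real.sqrt x * Real.exp (-μ * x)) := by
        have he : Real.exp (-ν * x) ≤ Real.exp 1 * Real.exp (-μ * x) := by
          rw [← Real.exp_add]
          apply Real.exp_le_exp.2
          nlinarith
        calc Real.exp (-ν * x) ≤ Real.exp 1 * Real.exp (-μ * x) := he
          _ ≤ Real.exp 1 * (Real.sqrt x * Real.exp (-μ * x)) := by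
              apply mul_le_mul_of_nonneg_left _ (Real.exp_pos _).le
              exact le_mul_of_one_le_left (Real.exp_pos _).le hsx
      have : ENNReal.ofReal (Real.exp (-ν * x)) ≤
          ENNReal.ofReal (Real.exp 1) * ENNReal.ofReal (Real.sqrt x * Real.exp (-μ * x)) := by
        rw [← ENNReal.ofReal_mul (Real.exp_pos _).le]
        exact ENNReal.ofReal_le_ofReal hr
      calc ENNReal.ofReal (Real.exp (-ν * x)) ≤ _ := this
        _ ≤ _ := le_add_right (le_add_left le_rfl)
    · have hsμ : (1:ℝ) ≤ Real.sqrt μ * Real.sqrt x := by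
        rw [← Real.sqrt_mul hμ0.le]
        rw [Real.le_sqrt' one_pos]; nlinarith
      have hr : Real.exp (-ν * x) ≤ Real.sqrt μ * (Real.sqrt x * Real.exp (-ν * x)) := by
        rw [← mul_assoc]
        exact le_mul_of_one_le_left (Real.exp_pos _).le hsμ
      have : ENNReal.ofReal (Real.exp (-ν * x)) ≤
          ENNReal.ofReal (Real.sqrt μ) * ENNReal.ofReal (Real.sqrt x * Real.exp (-ν * x)) := by
        rw [← ENNReal.ofReal_mul (Real.sqrt_nonneg _)]
        exact ENNReal.ofReal_le_ofReal hr
      calc ENNReal.ofReal (Real.exp (-ν * x)) ≤ _ := this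
        _ ≤ _ := le_add_left le_rfl

/-- The integrated comparison. -/
lemma G_le {ν μ : ℝ} (hν0 : 0 < ν) (hνμ : ν ≤ μ) (ω : Ω) :
    Gi β ν ω ≤ β ω (Set.Iio 1 ∩ Set.Ici 0)
      + ENNReal.ofReal (Real.exp 1) * Fi β μ ω
      + ENNReal.ofReal (Real.sqrt μ) * Fi β ν ω := by
  have step1 : Gi β ν ω ≤ ∫⁻ x in Set.Ici (0:ℝ),
      ((Set.Iio (1:ℝ)).indicator (fun _ => (1:ℝ≥0∞)) x
      + ENNReal.ofReal (Real.exp 1) * ENNReal.ofReal (Real.sqrt x * Real.exp (-μ * x))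
      + ENNReal.ofReal (Real.sqrt μ) * ENNReal.ofReal (Real.sqrt x * Real.exp (-ν * x))) ∂β ω := by
    rw [Gi]
    refine lintegral_mono_ae ((ae_restrict_iff' measurableSet_Ici).2 (ae_of_all _ fun x hx => ?_))
    exact pointwise_bound hν0 hνμ hx
  refine step1.trans (le_of_eq ?_)
  have hm1 : Measurable fun x : ℝ => (Set.Iio (1:ℝ)).indicator (fun _ => (1:ℝ≥0∞)) x :=
    measurable_const.indicator measurableSet_Iio
  have hm2 : Measurable fun x : ℝ =>
      ENNReal.ofReal (Real.exp 1) * ENNReal.ofReal (Real.sqrt x * Real.exp (-μ * x)) :=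
    ((contF μ).measurable.ennreal_ofReal).const_mul _
  rw [lintegral_add_left (f := fun x : ℝ => (Set.Iio (1:ℝ)).indicator (fun _ => (1:ℝ≥0∞)) x + ENNReal.ofReal (Real.exp 1) * ENNReal.ofReal (Real.sqrt x * Real.exp (-μ * x))) (hm1.add hm2), lintegral_add_left hm1]
  congr 1
  · congr 1
    · rw [lintegral_indicator measurableSet_Iio, setLIntegral_one,
        Measure.restrict_apply measurableSet_Iio]
    · rw [lintegral_const_mul' _ _ ENNReal.ofReal_ne_top, Fi]
  · rw [lintegral_const_mul' _ _ ENNReal.ofReal_ne_top, Fi]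

/-- Monotone convergence in the decay parameter. -/
lemma G_eq_iSup {lam μ : ℝ} (hl : 0 < lam) (hlμ : lam < μ) (ω : Ω) :
    Gi β lam ω = ⨆ n : ℕ, Gi β (lam + (μ - lam)/(n+1)) ω := by
  set ν : ℕ → ℝ := fun n => lam + (μ - lam)/(n+1) with hν
  have hνgt : ∀ n, lam < ν n := by
    intro n
    have : (0:ℝ) < (μ - lam)/(n+1) := div_pos (by linarith) (by positivity)
    simp only [hν]; linarith
  have hνanti : ∀ {n m : ℕ}, n ≤ m → ν m ≤ ν n := by
    intro n m hnm
    have h1 : ((n:ℝ)+1) ≤ ((m:ℝ)+1) := by exact_mod_cast by omega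
    have := div_le_div_of_nonneg_left (by linarith : (0:ℝ) ≤ μ - lam) (by positivity) h1
    simp only [hν]; linarith [div_le_div_of_nonneg_left (show (0:ℝ) ≤ μ - lam by linarith)
      (show (0:ℝ) < (n:ℝ)+1 by positivity) h1]
  have hνtend : Tendsto ν atTop (𝓝 lam) := by
    have h0 : Tendsto (fun n : ℕ => (μ - lam) * (1/((n:ℝ)+1))) atTop (𝓝 ((μ - lam) * 0)) :=
      tendsto_const_nhds.mul tendsto_one_div_add_atTop_nhds_zero_nat
    have h1 : Tendsto (fun n : ℕ => lam + (μ - lam) * (1/((n:ℝ)+1))) atTop (𝓝 (lam + (μ - lam) * 0)) :=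
      tendsto_const_nhds.add h0
    have h2 : (fun n : ℕ => lam + (μ - lam) * (1/((n:ℝ)+1))) = ν := by
      funext n; simp only [hν]; rw [mul_one_div]
    rw [h2] at h1
    simpa using h1
  have key : ∀ x : ℝ, 0 ≤ x →
      (⨆ n : ℕ, ENNReal.ofReal (Real.exp (-(ν n) * x))) = ENNReal.ofReal (Real.exp (-lam * x)) := by
    intro x hx
    apply le_antisymm
    · refine iSup_le fun n => ENNReal.ofReal_le_ofReal (Real.exp_le_exp.2 ?_)
      have := hνgt n
      nlinarith
    · have htd : Tendsto (fun n : ℕ => ENNReal.ofReal (Real.exp (-(ν n) * x))) atTop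
          (𝓝 (ENNReal.ofReal (Real.exp (-lam * x)))) := by
        apply (ENNReal.continuous_ofReal.tendsto _).comp
        apply (Real.continuous_exp.tendsto _).comp
        exact (hνtend.neg).mul_const x
      exact le_of_tendsto htd (Eventually.of_forall fun n => le_iSup
        (fun n : ℕ => ENNReal.ofReal (Real.exp (-(ν n) * x))) n)
  have hmono : ∀ x : ℝ, 0 ≤ x →
      Monotone fun n : ℕ => ENNReal.ofReal (Real.exp (-(ν n) * x)) := by
    intro x hx n m hnm
    refine ENNReal.ofReal_le_ofReal (Real.exp_le_exp.2 ?_)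
    have := hνanti hnm
    nlinarith
  calc Gi β lam ω
      = ∫⁻ x in Set.Ici (0:ℝ), ⨆ n : ℕ, ENNReal.ofReal (Real.exp (-(ν n) * x)) ∂β ω := by
        rw [Gi]
        refine lintegral_congr_ae ((ae_restrict_iff' measurableSet_Ici).2
          (ae_of_all _ fun x hx => ?_))
        exact (key x hx).symm
    _ = ⨆ n : ℕ, Gi β (ν n) ω := by
        rw [lintegral_iSup' (fun n => ((contG (ν n)).measurable.ennreal_ofReal).aemeasurable)
          ((ae_restrict_iff' measurableSet_Ici).2 (ae_of_all _ fun x hx => hmono x hx))]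
        rfl

/-- Elementary bound `L^p e^{-L/2} ≤ (2p)^p`. -/
lemma rpow_mul_exp_le {p L : ℝ} (hp : 0 < p) (hL : 1 ≤ L) :
    L ^ p * Real.exp (-(L/2)) ≤ (2*p) ^ p := by
  have hL0 : (0:ℝ) < L := lt_of_lt_of_le one_pos hL
  have h2p : (0:ℝ) < 2*p := by linarith
  have hlog : Real.log L ≤ L/(2*p) + Real.log (2*p) := by
    have h := Real.log_le_sub_one_of_pos (show (0:ℝ) < L/(2*p) by positivity)
    rw [Real.log_div hL0.ne' h2p.ne'] at h
    linarith
  have h1 : L ^ p = Real.exp (Real.log L * p) := Real.rpow_def_of_pos hL0 p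
  have h2 : (2*p) ^ p = Real.exp (Real.log (2*p) * p) := Real.rpow_def_of_pos h2p p
  rw [h1, h2, ← Real.exp_add]
  apply Real.exp_le_exp.2
  have hmul : Real.log L * p ≤ (L/(2*p) + Real.log (2*p)) * p := mul_le_mul_of_nonneg_right hlog hp.le
  have hexp2 : (L/(2*p) + Real.log (2*p)) * p = L/2 + Real.log (2*p) * p := by
    field_simp
  linarith

/-- Existence of a bound for one a.e.-finite `ℝ≥0∞`-valued random variable. -/
lemma exists_nat_bound (P : Measure Ω) [IsProbabilityMeasure P] {Z : Ω → ℝ≥0∞}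
    (hZm : Measurable Z) (hZfin : ∀ ω, Z ω < ⊤) {ε : ℝ} (hε : 0 < ε) :
    ∃ n : ℕ, P {ω | ((n:ℝ≥0∞)) < Z ω} ≤ ENNReal.ofReal ε := by
  have hmeasS : ∀ n : ℕ, MeasurableSet {ω | ((n:ℝ≥0∞)) < Z ω} := fun n =>
    hZm measurableSet_Ioi
  have hanti : Antitone fun n : ℕ => {ω | ((n:ℝ≥0∞)) < Z ω} := by
    intro n m hnm ω hω
    have : ((n:ℝ≥0∞)) ≤ (m:ℝ≥0∞) := by exact_mod_cast hnm
    exact lt_of_le_of_lt this hω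
  have hempty : (⋂ n : ℕ, {ω | ((n:ℝ≥0∞)) < Z ω}) = ∅ := by
    apply Set.eq_empty_iff_forall_notMem.2
    intro ω hω
    obtain ⟨n, hn⟩ := ENNReal.exists_nat_gt (hZfin ω).ne
    exact absurd (Set.mem_iInter.1 hω n) (not_lt.2 hn.le)
  have htend : Tendsto (fun n : ℕ => P {ω | ((n:ℝ≥0∞)) < Z ω}) atTop (𝓝 0) := by
    have := tendsto_measure_iInter_atTop (μ := P)
      (fun n => (hmeasS n).nullMeasurableSet) hanti ⟨0, measure_ne_top P _⟩
    rw [hempty, measure_empty] at this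
    exact this
  have hpos : (0:ℝ≥0∞) < ENNReal.ofReal ε := ENNReal.ofReal_pos.2 hε
  obtain ⟨n, hn⟩ := (htend.eventually (gt_mem_nhds hpos)).exists
  exact ⟨n, hn.le⟩


/-- `Fi` is antitone in the decay parameter. -/
lemma Fi_anti {m₁ m₂ : ℝ} (h : m₁ ≤ m₂) (ω : Ω) : Fi β m₂ ω ≤ Fi β m₁ ω := by
  rw [Fi, Fi]
  refine lintegral_mono_ae ((ae_restrict_iff' measurableSet_Ici).2 (ae_of_all _ fun x hx => ?_))
  refine ENNReal.ofReal_le_ofReal (mul_le_mul_of_nonneg_left ?_ (Real.sqrt_nonneg _))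
  apply Real.exp_le_exp.2
  have hx0 : (0:ℝ) ≤ x := hx
  nlinarith

set_option maxHeartbeats 1000000 in
lemma main_tight (P : Measure Ω) [IsProbabilityMeasure P]
    (hmeas : Measurable β)
    (hloc : ∀ ω, IsLocallyFiniteMeasure (β ω))
    (htight : TightFamily P (fun l : Set.Ioo (0:ℝ) 1 => fun ω =>
      (l : ℝ) ^ ((3:ℝ)/2) * ∫ x in Set.Ici (0:ℝ),
        Real.sqrt x * Real.exp (-(l:ℝ) * x) ∂(β ω)))
    {α : ℝ} (hα : 1 < α) :
    TightFamily P (fun l : Set.Ioo (0:ℝ) (Real.exp (-1)) => fun ω =>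
      Real.log (1 / (l:ℝ)) ^ α * (l : ℝ) ^ ((3:ℝ)/2) *
        ∫ x in Set.Ici (0:ℝ), Real.exp (-(l:ℝ) * x) ∂(β ω)) := by
  have hα0 : (0:ℝ) < α := by linarith
  set c : ℝ := 2*α/3 with hc
  have hc0 : 0 < c := by rw [hc]; positivity
  set K₀ : ℝ := (2*α) ^ α with hK₀
  have hK₀pos : 0 < K₀ := Real.rpow_pos_of_pos (by linarith) _
  have h232pos : (0:ℝ) < 2 ^ ((3:ℝ)/2) := Real.rpow_pos_of_pos (by norm_num) _
  set K₁ : ℝ := 1 + 2 ^ ((3:ℝ)/2) * K₀ with hK₁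
  have hK₁pos : 0 < K₁ := by rw [hK₁]; positivity
  set p : ℝ := α + c/2 with hp
  have hppos : 0 < p := by rw [hp]; positivity
  set K₂ : ℝ := (2*p) ^ p with hK₂
  have hK₂pos : 0 < K₂ := Real.rpow_pos_of_pos (by linarith) _
  intro ε hε
  have hε3 : 0 < ε/3 := by linarith
  obtain ⟨M', hM'⟩ := htight (ε/3) hε3
  set MY : ℝ := max M' 0 with hMY
  have hMY0 : (0:ℝ) ≤ MY := le_max_right _ _
  have hMYb : ∀ l : Set.Ioo (0:ℝ) 1, P {ω | MY < |(l : ℝ) ^ ((3:ℝ)/2) *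
      ∫ x in Set.Ici (0:ℝ), Real.sqrt x * Real.exp (-(l:ℝ) * x) ∂(β ω)|}
      ≤ ENNReal.ofReal (ε/3) := by
    intro l
    refine le_trans (measure_mono ?_) (hM' l)
    intro ω hω
    exact lt_of_le_of_lt (le_max_left M' 0) hω
  set Z : Ω → ℝ≥0∞ := fun ω => β ω (Set.Iio 1 ∩ Set.Ici 0) with hZ
  have hZm : Measurable Z :=
    (Measure.measurable_coe (measurableSet_Iio.inter measurableSet_Ici)).comp hmeas
  have hZfin : ∀ ω, Z ω < ⊤ := by
    intro ω
    haveI := hloc ω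
    refine lt_of_le_of_lt (measure_mono ?_) (isCompact_Icc (a := (0:ℝ)) (b := 1)).measure_lt_top
    intro x hx
    exact ⟨hx.2, le_of_lt hx.1⟩
  obtain ⟨nβ, hnβ⟩ := exists_nat_bound P hZm hZfin hε3
  refine ⟨K₀ * nβ + 3 * K₁ * MY + K₂ * MY, ?_⟩
  rintro ⟨lam, hlam0, hlame⟩
  -- basic facts about lam, Real.log (1/lam), μ
  have hloglam : Real.log (1/lam) = - Real.log lam := by rw [one_div, Real.log_inv]
  have hlamlog : Real.log lam < -1 := by
    have h := Real.log_lt_log hlam0 hlame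
    rwa [Real.log_exp] at h
  have hL1 : 1 < Real.log (1/lam) := by rw [hloglam]; linarith
  have hL0 : (0:ℝ) < Real.log (1/lam) := by linarith
  have hlam1 : lam < 1 := by
    have : Real.exp (-1 : ℝ) < 1 := Real.exp_lt_one_iff.2 (by norm_num)
    linarith
  have hLc1 : 1 < Real.log (1/lam) ^ c :=
    (Real.one_lt_rpow_iff_of_pos hL0).2 (Or.inl ⟨hL1, hc0⟩)
  have hehalf : Real.exp (-1 : ℝ) < 1/2 := by
    have h2 : (2:ℝ) < Real.exp 1 := by
      have := Real.exp_one_gt_d9; linarith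
    rw [Real.exp_neg]
    rw [show (1:ℝ)/2 = 2⁻¹ by norm_num]
    exact inv_strictAnti₀ (by norm_num) h2
  set μ : ℝ := min (lam * Real.log (1/lam) ^ c) (1/2) with hμ
  have hμpos : 0 < μ := lt_min (by positivity) (by norm_num)
  have hlamμ : lam < μ := by
    apply lt_min
    · nlinarith
    · linarith
  have hμhalf : μ ≤ 1/2 := min_le_right _ _
  have hμ1 : μ < 1 := by linarith
  -- the approximating sequence
  set ν : ℕ → ℝ := fun n => lam + (μ - lam)/(n+1) with hν
  have hνgt : ∀ n, lam < ν n := by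
    intro n
    have : (0:ℝ) < (μ - lam)/(n+1) := div_pos (by linarith) (by positivity)
    simp only [hν]; linarith
  have hνle : ∀ n, ν n ≤ μ := by
    intro n
    have h1 : (μ - lam)/((n:ℝ)+1) ≤ μ - lam := by
      apply div_le_self (by linarith)
      have : (0:ℝ) ≤ (n:ℝ) := Nat.cast_nonneg n
      linarith
    simp only [hν]; linarith
  have hνmem : ∀ n, ν n ∈ Set.Ioo (0:ℝ) 1 := fun n =>
    ⟨lt_trans hlam0 (hνgt n), by linarith [hνle n]⟩
  -- powers
  have hlam32pos : (0:ℝ) < lam ^ ((3:ℝ)/2) := Real.rpow_pos_of_pos hlam0 _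
  have hμ32pos : (0:ℝ) < μ ^ ((3:ℝ)/2) := Real.rpow_pos_of_pos hμpos _
  have hLαpos : (0:ℝ) < Real.log (1/lam) ^ α := Real.rpow_pos_of_pos hL0 _
  have hlamrw : lam ^ ((3:ℝ)/2) = Real.exp (Real.log lam * ((3:ℝ)/2)) :=
    Real.rpow_def_of_pos hlam0 _
  have hloglamL : Real.log lam = -Real.log (1/lam) := by rw [hloglam, neg_neg]
  -- (I1)
  have hI1 : Real.log (1/lam) ^ α * lam ^ ((3:ℝ)/2) ≤ K₀ := by
    have h1 : lam ^ ((3:ℝ)/2) ≤ Real.exp (-(Real.log (1/lam)/2)) := by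
      rw [hlamrw]
      apply Real.exp_le_exp.2
      rw [hloglamL]
      linarith
    calc Real.log (1/lam) ^ α * lam ^ ((3:ℝ)/2) ≤ Real.log (1/lam) ^ α * Real.exp (-(Real.log (1/lam)/2)) :=
          mul_le_mul_of_nonneg_left h1 hLαpos.le
      _ ≤ (2*α) ^ α := rpow_mul_exp_le hα0 hL1.le
      _ = K₀ := by rw [hK₀]
  -- (I3)
  have hsqrtlam : Real.sqrt lam = Real.exp (-(Real.log (1/lam)/2)) := by
    rw [Real.sqrt_eq_rpow, Real.rpow_def_of_pos hlam0, hloglamL]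
    congr 1
    ring
  have hI3 : Real.log (1/lam) ^ α * Real.sqrt μ ≤ K₂ := by
    have h1 : Real.sqrt μ ≤ Real.exp (-(Real.log (1/lam)/2)) * Real.log (1/lam) ^ (c/2) := by
      have h2 : Real.sqrt μ ≤ Real.sqrt (lam * Real.log (1/lam) ^ c) :=
        Real.sqrt_le_sqrt (min_le_left _ _)
      have h3 : Real.sqrt (lam * Real.log (1/lam) ^ c) = Real.sqrt lam * Real.sqrt (Real.log (1/lam) ^ c) :=
        Real.sqrt_mul hlam0.le _
      have h4 : Real.sqrt (Real.log (1/lam) ^ c) = Real.log (1/lam) ^ (c/2) := by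
        rw [Real.sqrt_eq_rpow, ← Real.rpow_mul hL0.le]
        congr 1
        ring
      rw [h3, h4, hsqrtlam] at h2
      exact h2
    calc Real.log (1/lam) ^ α * Real.sqrt μ ≤ Real.log (1/lam) ^ α * (Real.exp (-(Real.log (1/lam)/2)) * Real.log (1/lam) ^ (c/2)) :=
          mul_le_mul_of_nonneg_left h1 hLαpos.le
      _ = (Real.log (1/lam) ^ α * Real.log (1/lam) ^ (c/2)) * Real.exp (-(Real.log (1/lam)/2)) := by ring
      _ = Real.log (1/lam) ^ p * Real.exp (-(Real.log (1/lam)/2)) := by rw [← Real.rpow_add hL0, hp]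
      _ ≤ (2*p) ^ p := rpow_mul_exp_le hppos hL1.le
      _ = K₂ := by rw [hK₂]
  -- (I2)
  have hI2 : Real.log (1/lam) ^ α * (lam ^ ((3:ℝ)/2) / μ ^ ((3:ℝ)/2)) ≤ K₁ := by
    rcases min_cases (lam * Real.log (1/lam) ^ c) (1/2) with ⟨heq, _⟩ | ⟨heq, _⟩
    · have hμeq : μ = lam * Real.log (1/lam) ^ c := by rw [hμ, heq]
      have h1 : μ ^ ((3:ℝ)/2) = lam ^ ((3:ℝ)/2) * Real.log (1/lam) ^ α := by
        rw [hμeq, Real.mul_rpow hlam0.le (by positivity), ← Real.rpow_mul hL0.le]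
        congr 2
        rw [hc]; ring
      rw [h1]
      have : Real.log (1/lam) ^ α * (lam ^ ((3:ℝ)/2) / (lam ^ ((3:ℝ)/2) * Real.log (1/lam) ^ α)) = 1 := by
        field_simp
      rw [this, hK₁]
      nlinarith
    · have hμeq : μ = 1/2 := by rw [hμ, heq]
      have h1 : μ ^ ((3:ℝ)/2) = (2 ^ ((3:ℝ)/2) : ℝ)⁻¹ := by
        rw [hμeq, show (1:ℝ)/2 = 2⁻¹ by norm_num, Real.inv_rpow (by norm_num : (0:ℝ) ≤ 2)]
      rw [h1, div_inv_eq_mul]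
      calc Real.log (1/lam) ^ α * (lam ^ ((3:ℝ)/2) * 2 ^ ((3:ℝ)/2))
          = (Real.log (1/lam) ^ α * lam ^ ((3:ℝ)/2)) * 2 ^ ((3:ℝ)/2) := by ring
        _ ≤ K₀ * 2 ^ ((3:ℝ)/2) := mul_le_mul_of_nonneg_right hI1 h232pos.le
        _ ≤ K₁ := by rw [hK₁]; nlinarith
  -- events
  set A : Set Ω := {ω | ((nβ:ℝ≥0∞)) < Z ω} with hA
  set B : Set Ω := {ω | MY < |μ ^ ((3:ℝ)/2) *
      ∫ x in Set.Ici (0:ℝ), Real.sqrt x * Real.exp (-μ * x) ∂(β ω)|} with hB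
  set C : ℕ → Set Ω := fun n => {ω | Gi β lam ω < ⊤ ∧
      ENNReal.ofReal (MY / lam ^ ((3:ℝ)/2)) < Fi β (ν n) ω} with hC
  -- inclusion
  have hsub : {ω | K₀ * nβ + 3 * K₁ * MY + K₂ * MY <
      |Real.log (1/lam) ^ α * lam ^ ((3:ℝ)/2) *
        ∫ x in Set.Ici (0:ℝ), Real.exp (-lam * x) ∂(β ω)|} ⊆ A ∪ B ∪ ⋃ n, C n := by
    intro ω hω
    simp only [Set.mem_setOf_eq] at hω
    by_contra hnot
    simp only [Set.mem_union, Set.mem_iUnion, not_or, not_exists] at hnot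
    obtain ⟨⟨hnA, hnB⟩, hnC⟩ := hnot
    have hM0 : (0:ℝ) ≤ K₀ * nβ + 3 * K₁ * MY + K₂ * MY := by positivity
    rw [integral_G_eq] at hω
    have hXnn : (0:ℝ) ≤ Real.log (1/lam) ^ α * lam ^ ((3:ℝ)/2) * (Gi β lam ω).toReal := by
      have h1 : (0:ℝ) ≤ Real.log (1/lam) ^ α := (Real.rpow_pos_of_pos hL0 α).le
      exact mul_nonneg (mul_nonneg h1 hlam32pos.le) ENNReal.toReal_nonneg
    rw [abs_of_nonneg hXnn] at hω
    rcases eq_top_or_lt_top (Gi β lam ω) with hGtop | hGfin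
    · rw [hGtop] at hω
      simp only [ENNReal.toReal_top, mul_zero] at hω
      linarith
    · -- bounds on Fi
      have hFμfin : Fi β μ ω < ⊤ := Fi_lt_top hlam0 hlamμ hGfin
      have hFμ : Fi β μ ω ≤ ENNReal.ofReal (MY / μ ^ ((3:ℝ)/2)) := by
        rw [hB] at hnB
        simp only [Set.mem_setOf_eq, not_lt] at hnB
        rw [integral_F_eq] at hnB
        have habs : |μ ^ ((3:ℝ)/2) * (Fi β μ ω).toReal| =
            μ ^ ((3:ℝ)/2) * (Fi β μ ω).toReal :=
          abs_of_nonneg (by positivity)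
        rw [habs] at hnB
        rw [ENNReal.le_ofReal_iff_toReal_le hFμfin.ne (by positivity)]
        rw [le_div_iff₀ hμ32pos]
        linarith
      have hFν : ∀ n, Fi β (ν n) ω ≤ ENNReal.ofReal (MY / lam ^ ((3:ℝ)/2)) := by
        intro n
        have := hnC n
        rw [hC] at this
        simp only [Set.mem_setOf_eq, not_and, not_lt] at this
        exact this hGfin
      have hZω : Z ω ≤ ENNReal.ofReal (nβ:ℝ) := by
        rw [hA] at hnA
        simp only [Set.mem_setOf_eq, not_lt] at hnA
        rwa [ENNReal.ofReal_natCast]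
      -- the main estimate
      have hGle : Gi β lam ω ≤ ENNReal.ofReal ((nβ:ℝ) + Real.exp 1 * (MY / μ ^ ((3:ℝ)/2))
          + Real.sqrt μ * (MY / lam ^ ((3:ℝ)/2))) := by
        rw [G_eq_iSup hlam0 hlamμ ω]
        refine iSup_le fun n => ?_
        calc Gi β (ν n) ω ≤ Z ω + ENNReal.ofReal (Real.exp 1) * Fi β μ ω
              + ENNReal.ofReal (Real.sqrt μ) * Fi β (ν n) ω :=
            G_le (lt_trans hlam0 (hνgt n)) (hνle n) ω
          _ ≤ ENNReal.ofReal (nβ:ℝ)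
              + ENNReal.ofReal (Real.exp 1) * ENNReal.ofReal (MY / μ ^ ((3:ℝ)/2))
              + ENNReal.ofReal (Real.sqrt μ) * ENNReal.ofReal (MY / lam ^ ((3:ℝ)/2)) := by
            exact add_le_add (add_le_add hZω (mul_le_mul_right hFμ _))
              (mul_le_mul_right (hFν n) _)
          _ = ENNReal.ofReal ((nβ:ℝ) + Real.exp 1 * (MY / μ ^ ((3:ℝ)/2))
              + Real.sqrt μ * (MY / lam ^ ((3:ℝ)/2))) := by
            rw [← ENNReal.ofReal_mul (Real.exp_pos _).le,
              ← ENNReal.ofReal_mul (Real.sqrt_nonneg _),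
              ← ENNReal.ofReal_add (by positivity) (by positivity),
              ← ENNReal.ofReal_add (by positivity) (by positivity)]
      have hGtoReal : (Gi β lam ω).toReal ≤ (nβ:ℝ) + Real.exp 1 * (MY / μ ^ ((3:ℝ)/2))
          + Real.sqrt μ * (MY / lam ^ ((3:ℝ)/2)) :=
        ENNReal.toReal_le_of_le_ofReal (by positivity) hGle
      -- real algebra
      have he3 : Real.exp 1 ≤ 3 := by
        have := Real.exp_one_lt_d9; linarith
      have hfinal : Real.log (1/lam) ^ α * lam ^ ((3:ℝ)/2) * (Gi β lam ω).toReal ≤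
          K₀ * nβ + 3 * K₁ * MY + K₂ * MY := by
        have hfac : (0:ℝ) ≤ Real.log (1/lam) ^ α * lam ^ ((3:ℝ)/2) := by positivity
        calc Real.log (1/lam) ^ α * lam ^ ((3:ℝ)/2) * (Gi β lam ω).toReal
            ≤ Real.log (1/lam) ^ α * lam ^ ((3:ℝ)/2) * ((nβ:ℝ) + Real.exp 1 * (MY / μ ^ ((3:ℝ)/2))
              + Real.sqrt μ * (MY / lam ^ ((3:ℝ)/2))) :=
            mul_le_mul_of_nonneg_left hGtoReal hfac
          _ = (Real.log (1/lam) ^ α * lam ^ ((3:ℝ)/2)) * (nβ:ℝ)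
              + (Real.exp 1 * MY) * (Real.log (1/lam) ^ α * (lam ^ ((3:ℝ)/2) / μ ^ ((3:ℝ)/2)))
              + (Real.log (1/lam) ^ α * Real.sqrt μ) * (lam ^ ((3:ℝ)/2) * (MY / lam ^ ((3:ℝ)/2))) := by
            ring
          _ = (Real.log (1/lam) ^ α * lam ^ ((3:ℝ)/2)) * (nβ:ℝ)
              + (Real.exp 1 * MY) * (Real.log (1/lam) ^ α * (lam ^ ((3:ℝ)/2) / μ ^ ((3:ℝ)/2)))
              + (Real.log (1/lam) ^ α * Real.sqrt μ) * MY := by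
            rw [mul_div_cancel₀ _ hlam32pos.ne']
          _ ≤ K₀ * nβ + 3 * K₁ * MY + K₂ * MY := by
            have hT1 : (Real.log (1/lam) ^ α * lam ^ ((3:ℝ)/2)) * (nβ:ℝ) ≤ K₀ * nβ :=
              mul_le_mul_of_nonneg_right hI1 (Nat.cast_nonneg _)
            have hT2 : (Real.exp 1 * MY) * (Real.log (1/lam) ^ α * (lam ^ ((3:ℝ)/2) / μ ^ ((3:ℝ)/2)))
                ≤ 3 * K₁ * MY := by
              have h1 : (Real.exp 1 * MY) * (Real.log (1/lam) ^ α * (lam ^ ((3:ℝ)/2) / μ ^ ((3:ℝ)/2)))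
                  ≤ (Real.exp 1 * MY) * K₁ :=
                mul_le_mul_of_nonneg_left hI2 (by positivity)
              have h2 : (Real.exp 1 * MY) * K₁ ≤ 3 * K₁ * MY := by
                nlinarith [he3, mul_nonneg hMY0 hK₁pos.le, Real.exp_pos 1]
              exact h1.trans h2
            have hT3 : (Real.log (1/lam) ^ α * Real.sqrt μ) * MY ≤ K₂ * MY :=
              mul_le_mul_of_nonneg_right hI3 hMY0
            linarith
      linarith
  -- putting it together
  refine le_trans (measure_mono hsub) ?_
  have hPA : P A ≤ ENNReal.ofReal (ε/3) := hnβ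
  have hPB : P B ≤ ENNReal.ofReal (ε/3) := hMYb ⟨μ, hμpos, hμ1⟩
  have hPC : P (⋃ n, C n) ≤ ENNReal.ofReal (ε/3) := by
    have hCmono : Monotone C := by
      intro n m hnm ω hωn
      rw [hC] at hωn ⊢
      obtain ⟨hfin, hlt⟩ := hωn
      refine ⟨hfin, lt_of_lt_of_le hlt ?_⟩
      apply Fi_anti _ ω
      -- ν m ≤ ν n
      have h1 : ((n:ℝ)+1) ≤ ((m:ℝ)+1) := by
        have : (n:ℝ) ≤ (m:ℝ) := Nat.cast_le.2 hnm
        linarith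
      have := div_le_div_of_nonneg_left (show (0:ℝ) ≤ μ - lam by linarith)
        (show (0:ℝ) < (n:ℝ)+1 by positivity) h1
      simp only [hν]
      linarith
    rw [hCmono.measure_iUnion]
    refine iSup_le fun n => ?_
    have hCsub : C n ⊆ {ω | MY < |(ν n) ^ ((3:ℝ)/2) *
        ∫ x in Set.Ici (0:ℝ), Real.sqrt x * Real.exp (-(ν n) * x) ∂(β ω)|} := by
      intro ω hωn
      rw [hC] at hωn
      obtain ⟨hfin, hlt⟩ := hωn
      have hFfin : Fi β (ν n) ω < ⊤ := Fi_lt_top hlam0 (hνgt n) hfin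
      have htr : MY / lam ^ ((3:ℝ)/2) < (Fi β (ν n) ω).toReal :=
        (ENNReal.ofReal_lt_iff_lt_toReal (by positivity) hFfin.ne).1 hlt
      have hν32pos : (0:ℝ) < (ν n) ^ ((3:ℝ)/2) :=
        Real.rpow_pos_of_pos (lt_trans hlam0 (hνgt n)) _
      have hν32ge : lam ^ ((3:ℝ)/2) ≤ (ν n) ^ ((3:ℝ)/2) :=
        Real.rpow_le_rpow hlam0.le (hνgt n).le (by norm_num)
      simp only [Set.mem_setOf_eq]
      rw [integral_F_eq]
      have hval : MY < (ν n) ^ ((3:ℝ)/2) * (Fi β (ν n) ω).toReal := by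
        have h2 : (ν n) ^ ((3:ℝ)/2) * (MY / lam ^ ((3:ℝ)/2)) <
            (ν n) ^ ((3:ℝ)/2) * (Fi β (ν n) ω).toReal :=
          mul_lt_mul_of_pos_left htr hν32pos
        have h3 : MY ≤ (ν n) ^ ((3:ℝ)/2) * (MY / lam ^ ((3:ℝ)/2)) := by
          rw [mul_div_assoc']
          rw [le_div_iff₀ hlam32pos]
          nlinarith
        linarith
      exact lt_of_lt_of_le hval (le_abs_self _)
    exact le_trans (measure_mono hCsub) (hMYb ⟨ν n, hνmem n⟩)
  calc P (A ∪ B ∪ ⋃ n, C n) ≤ P (A ∪ B) + P (⋃ n, C n) := measure_union_le _ _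
    _ ≤ P A + P B + P (⋃ n, C n) := by
      gcongr
      exact measure_union_le _ _
    _ ≤ ENNReal.ofReal (ε/3) + ENNReal.ofReal (ε/3) + ENNReal.ofReal (ε/3) := by
      gcongr
    _ = ENNReal.ofReal ε := by
      rw [← ENNReal.ofReal_add (by positivity) (by positivity),
        ← ENNReal.ofReal_add (by positivity) (by positivity)]
      congr 1
      ring

end LogGainAux

set_option maxHeartbeats 1000000 in
/-- If `λ^{3/2} ∫ √x e^{-λx} β(dx)` is tight for `λ ∈ (0,1)` then, for every `α > 1`,
`(log(1/λ))^α λ^{3/2} ∫ e^{-λx} β(dx)` is tight for `λ ∈ (0,1/e)`, and consequently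
`log(1/λ) λ^{3/2} ∫ e^{-λx} β(dx) → 0` in probability as `λ → 0+`. -/
theorem log_gain_tightness
    {Ω : Type*} [MeasurableSpace Ω] (P : Measure Ω) [IsProbabilityMeasure P]
    (β : Ω → Measure ℝ) (hmeas : Measurable β)
    (hloc : ∀ ω, IsLocallyFiniteMeasure (β ω))
    (hsupp : ∀ ω, β ω (Set.Iio 0) = 0)
    (htight : TightFamily P (fun l : Set.Ioo (0:ℝ) 1 => fun ω =>
      (l : ℝ) ^ ((3:ℝ)/2) * ∫ x in Set.Ici (0:ℝ),
        Real.sqrt x * Real.exp (-(l:ℝ) * x) ∂(β ω))) :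
    (∀ α : ℝ, 1 < α →
      TightFamily P (fun l : Set.Ioo (0:ℝ) (Real.exp (-1)) => fun ω =>
        Real.log (1 / (l:ℝ)) ^ α * (l : ℝ) ^ ((3:ℝ)/2) *
          ∫ x in Set.Ici (0:ℝ), Real.exp (-(l:ℝ) * x) ∂(β ω)))
    ∧
    ConvInProb P (nhdsWithin (0:ℝ) (Set.Ioi 0))
      (fun l ω => Real.log (1 / l) * l ^ ((3:ℝ)/2) *
        ∫ x in Set.Ici (0:ℝ), Real.exp (-l * x) ∂(β ω)) 0 := by
  have hmain : ∀ α : ℝ, 1 < α →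
      TightFamily P (fun l : Set.Ioo (0:ℝ) (Real.exp (-1)) => fun ω =>
        Real.log (1 / (l:ℝ)) ^ α * (l : ℝ) ^ ((3:ℝ)/2) *
          ∫ x in Set.Ici (0:ℝ), Real.exp (-(l:ℝ) * x) ∂(β ω)) := fun α hα =>
    LogGainAux.main_tight P hmeas hloc htight hα
  refine ⟨hmain, ?_⟩
  intro ε hε
  rw [ENNReal.tendsto_nhds_zero]
  intro δ hδ
  set δ' : ℝ≥0∞ := min 1 δ with hδ'
  have hδ'top : δ' ≠ ⊤ := ne_top_of_le_ne_top ENNReal.one_ne_top (min_le_left _ _)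
  have hδ'pos : 0 < δ' := lt_min zero_lt_one hδ
  have hδr : 0 < δ'.toReal := ENNReal.toReal_pos hδ'pos.ne' hδ'top
  obtain ⟨M, hM⟩ := hmain 2 (by norm_num) δ'.toReal hδr
  set b : ℝ := min (Real.exp (-1)) (Real.exp (-(|M|/ε + 1))) with hb
  have hb0 : 0 < b := lt_min (Real.exp_pos _) (Real.exp_pos _)
  filter_upwards [Ioo_mem_nhdsGT_of_mem
    (show (0:ℝ) ∈ Set.Ico (0:ℝ) b from ⟨le_rfl, hb0⟩)] with lam hlam
  obtain ⟨hl0, hlb⟩ := hlam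
  have hle : lam < Real.exp (-1) := lt_of_lt_of_le hlb (min_le_left _ _)
  have hlM : lam < Real.exp (-(|M|/ε + 1)) := lt_of_lt_of_le hlb (min_le_right _ _)
  have hL : |M|/ε + 1 < Real.log (1/lam) := by
    have h := Real.log_lt_log hl0 hlM
    rw [Real.log_exp] at h
    rw [one_div, Real.log_inv]
    linarith
  have hL0 : 0 < Real.log (1/lam) := by
    have : (0:ℝ) ≤ |M|/ε := by positivity
    linarith
  have hsub : {ω | ε < |Real.log (1/lam) * lam ^ ((3:ℝ)/2) *
        (∫ x in Set.Ici (0:ℝ), Real.exp (-lam * x) ∂(β ω)) - 0|}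
      ⊆ {ω | M < |Real.log (1/lam) ^ (2:ℝ) * lam ^ ((3:ℝ)/2) *
        ∫ x in Set.Ici (0:ℝ), Real.exp (-lam * x) ∂(β ω)|} := by
    intro ω hω
    simp only [Set.mem_setOf_eq, sub_zero] at hω ⊢
    set I : ℝ := ∫ x in Set.Ici (0:ℝ), Real.exp (-lam * x) ∂(β ω) with hI
    set Lr : ℝ := Real.log (1/lam) with hLr
    have h2 : Lr ^ (2:ℝ) = Lr * Lr := by
      rw [show (2:ℝ) = ((2:ℕ):ℝ) by norm_num, Real.rpow_natCast]
      ring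
    have habs : |Lr ^ (2:ℝ) * lam ^ ((3:ℝ)/2) * I| =
        Lr * |Lr * lam ^ ((3:ℝ)/2) * I| := by
      rw [h2, show Lr * Lr * lam ^ ((3:ℝ)/2) * I = Lr * (Lr * lam ^ ((3:ℝ)/2) * I) by ring,
        abs_mul, abs_of_pos hL0]
    rw [habs]
    have h3 : Lr * ε ≤ Lr * |Lr * lam ^ ((3:ℝ)/2) * I| :=
      mul_le_mul_of_nonneg_left hω.le hL0.le
    have h4 : (|M|/ε + 1) * ε < Lr * ε := mul_lt_mul_of_pos_right hL hε
    have h5 : (|M|/ε + 1) * ε = |M| + ε := by field_simp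
    have h6 : M ≤ |M| := le_abs_self M
    nlinarith
  calc P {ω | ε < |Real.log (1/lam) * lam ^ ((3:ℝ)/2) *
        (∫ x in Set.Ici (0:ℝ), Real.exp (-lam * x) ∂(β ω)) - 0|}
      ≤ P {ω | M < |Real.log (1/lam) ^ (2:ℝ) * lam ^ ((3:ℝ)/2) *
        ∫ x in Set.Ici (0:ℝ), Real.exp (-lam * x) ∂(β ω)|} := measure_mono hsub
    _ ≤ ENNReal.ofReal δ'.toReal := hM ⟨lam, hl0, hle⟩
    _ = δ' := ENNReal.ofReal_toReal hδ'top
    _ ≤ δ := min_le_right _ _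

end
end

section
/- Let η_n be a sequence in 𝓜₂ and let η ∈ 𝓜 be a point measure such that η_n → η vaguely (∫h dη_n → ∫h dη for every nonnegative continuous compactly supported h : ℝ → ℝ). Assume that for each integer k ≥ 1, sup_n ∫α_k dη_n < ∞, and that sup_n max η_n < ∞ and limsup_{n→∞} max η_n > −∞. Then η ∈ 𝓜₂ and η_n d₂-converges to η. -/
open MeasureTheory Filter Set
open scoped ENNReal

noncomputable section

/-- A point measure on `ℝ`: a Borel measure that takes values in `ℕ` on bounded Borel sets
(in particular it is locally finite). -/
def IsPointMeasure (η : Measure ℝ) : Prop :=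
  ∀ B : Set ℝ, MeasurableSet B → Bornology.IsBounded B → ∃ n : ℕ, η B = n

/-- Membership in the space `𝓜₂`: a nonzero point measure, finite on `[0,∞)`, whose mass on
`[-m,-m+1]` grows subgaussianly. -/
def MemM2 (η : Measure ℝ) : Prop :=
  IsPointMeasure η ∧ η ≠ 0 ∧ η (Set.Ici 0) < ⊤ ∧
    Tendsto (fun m : ℕ =>
        (1 / (m : ℝ) ^ 2) *
          Real.log (max ((η (Set.Icc (-(m:ℝ)) (-(m:ℝ) + 1))).toReal) 1))
      atTop (nhds 0)

/-- The supremum of the support of a point measure (the position of the maximal atom). -/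
noncomputable def maxM (η : Measure ℝ) : ℝ := sSup {x : ℝ | η (Set.Ici x) ≠ 0}

/-- The functions `α_k` used in the definition of the metric `d₂`. -/
noncomputable def alphaF (k : ℕ) (x : ℝ) : ℝ :=
  if x ≤ -1 then Real.exp (-x ^ 2 / (k:ℝ))
  else if x < 0 then -Real.exp (-1 / (k:ℝ)) * x
  else 0

/-- The class `C_{d₂}⁺(ℝ)` of nonnegative bounded continuous functions vanishing
subgaussianly fast at `-∞`. -/
def MemCd2 (f : ℝ → ℝ) : Prop :=
  Continuous f ∧ (∀ x, 0 ≤ f x) ∧ (∃ Cb : ℝ, ∀ x, f x ≤ Cb) ∧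
    ∃ lam > (0:ℝ), ∃ C : ℝ, ∀ᶠ x in atBot, Real.exp (lam * x ^ 2) * f x ≤ C

/-- Vague convergence of measures on `ℝ`. -/
def VagueTendsto (ηn : ℕ → Measure ℝ) (η : Measure ℝ) : Prop :=
  ∀ h : ℝ → ℝ, Continuous h → HasCompactSupport h → (∀ x, 0 ≤ h x) →
    Tendsto (fun n => ∫ x, h x ∂(ηn n)) atTop (nhds (∫ x, h x ∂η))

/-- `d₂`-convergence in `𝓜₂`: vague convergence, convergence of the maxima, and convergence
of the integrals of the functions `α_k`. -/
def D2Tendsto (ηn : ℕ → Measure ℝ) (η : Measure ℝ) : Prop :=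
  VagueTendsto ηn η ∧
    Tendsto (fun n => maxM (ηn n)) atTop (nhds (maxM η)) ∧
    ∀ k : ℕ, 1 ≤ k →
      Tendsto (fun n => ∫ x, alphaF k x ∂(ηn n)) atTop (nhds (∫ x, alphaF k x ∂η))

section Helpers

lemma pm_nat_Icc {μ : Measure ℝ} (hμ : IsPointMeasure μ) (a b : ℝ) :
    ∃ n : ℕ, μ (Icc a b) = n :=
  hμ _ measurableSet_Icc (Metric.isBounded_Icc a b)

lemma pm_finite_Icc {μ : Measure ℝ} (hμ : IsPointMeasure μ) (a b : ℝ) :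
    μ (Icc a b) < ⊤ := by
  obtain ⟨n, hn⟩ := pm_nat_Icc hμ a b
  simp [hn]

lemma pm_one_le {μ : Measure ℝ} (hμ : IsPointMeasure μ) {a b : ℝ}
    (h : μ (Icc a b) ≠ 0) : 1 ≤ μ (Icc a b) := by
  obtain ⟨n, hn⟩ := pm_nat_Icc hμ a b
  rw [hn] at h ⊢
  have : n ≠ 0 := by simpa using h
  exact_mod_cast Nat.one_le_iff_ne_zero.2 this

lemma pm_fmoc {μ : Measure ℝ} (hμ : IsPointMeasure μ) : IsFiniteMeasureOnCompacts μ := by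
  constructor
  intro K hK
  obtain ⟨n, hn⟩ := hμ K hK.measurableSet hK.isBounded
  simp [hn]

lemma Ici_finite {μ : Measure ℝ} (hμ : IsPointMeasure μ) (h0 : μ (Ici 0) < ⊤) (x : ℝ) :
    μ (Ici x) < ⊤ := by
  have : Ici x ⊆ Icc x 0 ∪ Ici 0 := by
    intro y hy
    rcases le_or_gt y 0 with h | h
    · exact Or.inl ⟨hy, h⟩
    · exact Or.inr h.le
  calc μ (Ici x) ≤ μ (Icc x 0 ∪ Ici 0) := measure_mono this
    _ ≤ μ (Icc x 0) + μ (Ici 0) := measure_union_le _ _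
    _ < ⊤ := ENNReal.add_lt_top.2 ⟨pm_finite_Icc hμ _ _, h0⟩

lemma Ici_eq_iUnion (x : ℝ) : Ici x = ⋃ n : ℕ, Icc x (x + n) := by
  ext y
  simp only [mem_Ici, mem_iUnion, mem_Icc]
  constructor
  · intro hy
    obtain ⟨n, hn⟩ := exists_nat_ge (y - x)
    exact ⟨n, hy, by linarith⟩
  · rintro ⟨n, h1, _⟩; exact h1

lemma Ici_zero_of_small {μ : Measure ℝ} (hμ : IsPointMeasure μ) {x : ℝ}
    (h : μ (Ici x) < 1) : μ (Ici x) = 0 := by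
  have hz : ∀ n : ℕ, μ (Icc x (x + n)) = 0 := by
    intro n
    obtain ⟨m, hm⟩ := pm_nat_Icc hμ x (x + n)
    have : μ (Icc x (x + n)) ≤ μ (Ici x) := measure_mono Icc_subset_Ici_self
    rw [hm] at this ⊢
    have h2 : (m : ℝ≥0∞) < 1 := lt_of_le_of_lt this h
    have h3 : m = 0 := by exact_mod_cast Nat.lt_one_iff.1 (by exact_mod_cast h2)
    simp [h3]
  rw [Ici_eq_iUnion]
  exact measure_iUnion_null hz

lemma exists_zero_tail {μ : Measure ℝ} (hμ : IsPointMeasure μ) (h0 : μ (Ici 0) < ⊤) :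
    ∃ x₀ : ℝ, ∀ x ≥ x₀, μ (Ici x) = 0 := by
  have hIci : Tendsto (μ ∘ (fun n : ℕ => Ici (n : ℝ))) atTop (nhds (μ (⋂ n : ℕ, Ici (n:ℝ)))) := by
    apply tendsto_measure_iInter_atTop
    · exact fun n => measurableSet_Ici.nullMeasurableSet
    · intro a b hab
      exact Ici_subset_Ici.2 (by exact_mod_cast hab)
    · exact ⟨0, by simpa using h0.ne⟩
  have hempty : (⋂ n : ℕ, Ici ((n:ℝ))) = ∅ := by
    ext y
    simp only [mem_iInter, mem_Ici, mem_empty_iff_false, iff_false, not_forall, not_le]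
    obtain ⟨n, hn⟩ := exists_nat_gt y
    exact ⟨n, hn⟩
  rw [hempty, measure_empty] at hIci
  have := (ENNReal.tendsto_atTop_zero.1 hIci) (1/2) (by norm_num)
  obtain ⟨N, hN⟩ := this
  have hN' : μ (Ici (N:ℝ)) ≤ 1/2 := by
    have := hN N le_rfl
    simpa [Function.comp] using this
  refine ⟨N, fun x hx => ?_⟩
  apply Ici_zero_of_small hμ
  calc μ (Ici x) ≤ μ (Ici (N:ℝ)) := measure_mono (Ici_subset_Ici.2 hx)
    _ ≤ 1/2 := hN'
    _ < 1 := by norm_num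

lemma bddAbove_S {μ : Measure ℝ} (hμ : IsPointMeasure μ) (h0 : μ (Ici 0) < ⊤) :
    BddAbove {x : ℝ | μ (Ici x) ≠ 0} := by
  obtain ⟨x₀, hx₀⟩ := exists_zero_tail hμ h0
  refine ⟨x₀, fun x hx => ?_⟩
  by_contra hc
  exact hx (hx₀ x (le_of_not_ge hc))

lemma Ici_zero_of_gt_max {μ : Measure ℝ} (hμ : IsPointMeasure μ) (h0 : μ (Ici 0) < ⊤)
    {y : ℝ} (hy : maxM μ < y) : μ (Ici y) = 0 := by
  by_contra hc
  exact absurd (le_csSup (bddAbove_S hμ h0) hc) (not_le.2 hy)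

lemma Ioi_zero {μ : Measure ℝ} {y : ℝ} (h : ∀ z, y < z → μ (Ici z) = 0) :
    μ (Ioi y) = 0 := by
  have : Ioi y = ⋃ n : ℕ, Ici (y + 1/(n+1)) := by
    ext z
    simp only [mem_Ioi, mem_iUnion, mem_Ici]
    constructor
    · intro hz
      obtain ⟨n, hn⟩ := exists_nat_one_div_lt (sub_pos.2 hz)
      exact ⟨n, by linarith⟩
    · rintro ⟨n, hn⟩
      have : (0:ℝ) < 1/(n+1) := by positivity
      linarith
  rw [this]
  exact measure_iUnion_null fun n => h _ (by
    have : (0:ℝ) < 1/((n:ℝ)+1) := by positivity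
    linarith)

lemma alphaF_eq (k : ℕ) (x : ℝ) :
    alphaF k x = if x ≤ -1 then Real.exp (-x ^ 2 / (k:ℝ))
      else max 0 (-Real.exp (-1 / (k:ℝ)) * x) := by
  unfold alphaF
  rcases le_or_gt x (-1) with h | h
  · simp [h]
  · rcases lt_or_ge x 0 with h2 | h2
    · rw [if_neg (not_le.2 h), if_neg (not_le.2 h), if_pos h2, max_eq_right]
      have := Real.exp_pos (-1/(k:ℝ))
      nlinarith
    · rw [if_neg (not_le.2 h), if_neg (not_le.2 h), if_neg (not_lt.2 h2), max_eq_left]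
      have := Real.exp_pos (-1/(k:ℝ))
      nlinarith

lemma alphaF_continuous (k : ℕ) : Continuous (alphaF k) := by
  have : Continuous fun x : ℝ => if x ≤ -1 then Real.exp (-x ^ 2 / (k:ℝ))
      else max 0 (-Real.exp (-1 / (k:ℝ)) * x) := by
    apply Continuous.if_le
    · exact (Continuous.div_const (by continuity) _).rexp
    · exact continuous_const.max (continuous_const.mul continuous_id)
    · exact continuous_id
    · exact continuous_const
    · intro x hx
      have hexp := (Real.exp_pos (-1/(k:ℝ))).le
      rw [hx, max_eq_right (by nlinarith)]
      norm_num
  convert this using 1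
  ext x
  exact alphaF_eq k x

lemma alphaF_nonneg (k : ℕ) (x : ℝ) : 0 ≤ alphaF k x := by
  rw [alphaF_eq]
  rcases le_or_gt x (-1) with h | h
  · rw [if_pos h]; positivity
  · rw [if_neg (not_le.2 h)]; exact le_max_left _ _

lemma alphaF_le_one (k : ℕ) (x : ℝ) : alphaF k x ≤ 1 := by
  unfold alphaF
  rcases le_or_gt x (-1) with h | h
  · rw [if_pos h]
    apply Real.exp_le_one_iff.2
    have hk : (0:ℝ) ≤ (k:ℝ) := Nat.cast_nonneg k
    rcases eq_or_lt_of_le hk with h0 | h0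
    · rw [← h0]; simp
    · apply div_nonpos_of_nonpos_of_nonneg <;> nlinarith
  · rw [if_neg (not_le.2 h)]
    rcases lt_or_ge x 0 with h2 | h2
    · rw [if_pos h2]
      have hle : (-1:ℝ)/(k:ℝ) ≤ 0 := by
        apply div_nonpos_of_nonpos_of_nonneg
        · norm_num
        · exact Nat.cast_nonneg k
      have h3 := Real.exp_le_one_iff.2 hle
      have h4 := Real.exp_pos (-1/(k:ℝ))
      nlinarith
    · rw [if_neg (not_lt.2 h2)]; norm_num

lemma alphaF_zero_of_nonneg (k : ℕ) {x : ℝ} (hx : 0 ≤ x) : alphaF k x = 0 := by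
  unfold alphaF
  rw [if_neg (by linarith), if_neg (not_lt.2 hx)]

lemma alphaF_le {k : ℕ} {x m : ℝ} (hx : x ≤ -m) (hm : 1 ≤ m) :
    alphaF k x ≤ Real.exp (-m ^ 2 / (k:ℝ)) := by
  have hx1 : x ≤ -1 := by linarith
  unfold alphaF
  rw [if_pos hx1]
  apply Real.exp_le_exp.2
  rcases Nat.eq_zero_or_pos k with h0 | h0
  · simp [h0]
  · have hk : (0:ℝ) < (k:ℝ) := by exact_mod_cast h0
    rw [div_le_div_iff_of_pos_right hk]
    nlinarith

lemma le_alphaF {k : ℕ} {x m : ℝ} (hk : 1 ≤ k) (hx1 : x ≤ -1) (hxm : -m ≤ x) :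
    Real.exp (-m ^ 2 / (k:ℝ)) ≤ alphaF k x := by
  unfold alphaF
  rw [if_pos hx1]
  apply Real.exp_le_exp.2
  have hk : (0:ℝ) < (k:ℝ) := by exact_mod_cast hk
  rw [div_le_div_iff_of_pos_right hk]
  nlinarith

lemma alphaF_tail {k : ℕ} {x m : ℝ} (hk : 1 ≤ k) (hx : x ≤ -m) (hm : 1 ≤ m) :
    alphaF k x ≤ Real.exp (-m ^ 2 / (2 * (k:ℝ))) * alphaF (2 * k) x := by
  have hx1 : x ≤ -1 := by linarith
  have hkpos : (0:ℝ) < (k:ℝ) := by exact_mod_cast hk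
  unfold alphaF
  rw [if_pos hx1, if_pos hx1, ← Real.exp_add]
  apply Real.exp_le_exp.2
  push_cast
  rw [← add_div]
  have h2k : (0:ℝ) < 2*(k:ℝ) := by linarith
  rw [div_le_div_iff₀ hkpos h2k]
  have hsq : 0 ≤ x^2 - m^2 := by nlinarith
  nlinarith [mul_nonneg hsq hkpos.le]

end Helpers

section IntegrabilityHelpers
open scoped ENNReal

lemma window_bound {μ : Measure ℝ}
    (ht : Tendsto (fun m : ℕ => (1 / (m : ℝ) ^ 2) *
          Real.log (max ((μ (Set.Icc (-(m:ℝ)) (-(m:ℝ) + 1))).toReal) 1)) atTop (nhds 0))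
    {ε : ℝ} (hε : 0 < ε) :
    ∃ N : ℕ, ∀ j : ℕ, N ≤ j → 1 ≤ j →
      (μ (Set.Icc (-(j:ℝ)) (-(j:ℝ) + 1))).toReal ≤ Real.exp (ε * (j:ℝ)^2) := by
  have hev := ht.eventually (gt_mem_nhds hε)
  obtain ⟨N, hN⟩ := eventually_atTop.1 hev
  refine ⟨N, fun j hj hj1 => ?_⟩
  have hjpos : (0:ℝ) < (j:ℝ)^2 := by
    have : (1:ℝ) ≤ (j:ℝ) := by exact_mod_cast hj1
    positivity
  have h1 := hN j hj
  set t := (μ (Set.Icc (-(j:ℝ)) (-(j:ℝ) + 1))).toReal with hts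
  have h2 : Real.log (max t 1) < ε * (j:ℝ)^2 := by
    rw [one_div] at h1
    have := (inv_mul_lt_iff₀ hjpos).1 h1
    linarith [this]
  have h3 : max t 1 ≤ Real.exp (ε * (j:ℝ)^2) := by
    have hpos : (0:ℝ) < max t 1 := lt_of_lt_of_le one_pos (le_max_right _ _)
    calc max t 1 = Real.exp (Real.log (max t 1)) := (Real.exp_log hpos).symm
      _ ≤ Real.exp (ε * (j:ℝ)^2) := Real.exp_le_exp.2 h2.le
  exact le_trans (le_max_left _ _) h3

lemma alphaF_integrable {μ : Measure ℝ} (hpm : IsPointMeasure μ)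
    (ht : Tendsto (fun m : ℕ => (1 / (m : ℝ) ^ 2) *
          Real.log (max ((μ (Set.Icc (-(m:ℝ)) (-(m:ℝ) + 1))).toReal) 1)) atTop (nhds 0))
    {k : ℕ} (hk : 1 ≤ k) : Integrable (alphaF k) μ := by
  have hkR : (0:ℝ) < (k:ℝ) := by exact_mod_cast hk
  obtain ⟨N, hN⟩ := window_bound ht (by positivity : (0:ℝ) < 1/(4*(k:ℝ)))
  set c : ℕ → ℝ≥0∞ := fun m =>
    if m = 0 then 1 else ENNReal.ofReal (Real.exp (-(m:ℝ)^2/(k:ℝ))) with hc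
  have hc_le_one : ∀ m, c m ≤ 1 := by
    intro m
    rcases Nat.eq_zero_or_pos m with h0 | h0
    · simp [hc, h0]
    · have : m ≠ 0 := Nat.pos_iff_ne_zero.1 h0
      simp only [hc, if_neg this]
      rw [ENNReal.ofReal_le_one]
      apply Real.exp_le_one_iff.2
      apply div_nonpos_of_nonpos_of_nonneg _ hkR.le
      nlinarith [sq_nonneg ((m:ℝ))]
  have hwin : ∀ m : ℕ, μ (Set.Ioc (-(m:ℝ)-1) (-(m:ℝ))) < ⊤ := by
    intro m
    refine lt_of_le_of_lt (measure_mono Set.Ioc_subset_Icc_self) (pm_finite_Icc hpm _ _)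
  -- pointwise bound
  have hpt : ∀ x, ENNReal.ofReal (alphaF k x) ≤
      ∑' m : ℕ, (Set.Ioc (-(m:ℝ)-1) (-(m:ℝ))).indicator (fun _ => c m) x := by
    intro x
    rcases le_or_gt 0 x with hx | hx
    · rw [alphaF_zero_of_nonneg k hx]; simp
    · set m := ⌊-x⌋₊ with hm
      have h1 : (m:ℝ) ≤ -x := Nat.floor_le (by linarith)
      have h2 : -x < (m:ℝ) + 1 := Nat.lt_floor_add_one _
      have hxmem : x ∈ Set.Ioc (-(m:ℝ)-1) (-(m:ℝ)) := ⟨by linarith, by linarith⟩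
      have hcm : ENNReal.ofReal (alphaF k x) ≤ c m := by
        rcases Nat.eq_zero_or_pos m with h0 | h0
        · simp only [hc, h0, if_pos]
          exact ENNReal.ofReal_le_one.2 (alphaF_le_one k x)
        · have hne : m ≠ 0 := Nat.pos_iff_ne_zero.1 h0
          simp only [hc, if_neg hne]
          apply ENNReal.ofReal_le_ofReal
          exact alphaF_le (by linarith) (by exact_mod_cast h0)
      calc ENNReal.ofReal (alphaF k x) ≤ c m := hcm
        _ = (Set.Ioc (-(m:ℝ)-1) (-(m:ℝ))).indicator (fun _ => c m) x :=
            (Set.indicator_of_mem hxmem (fun _ => c m)).symm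
        _ ≤ _ := ENNReal.le_tsum m
  -- the sum of the integrals is finite
  have key : ∑' m : ℕ, c m * μ (Set.Ioc (-(m:ℝ)-1) (-(m:ℝ))) < ⊤ := by
    set a : ℕ → ℝ≥0∞ := fun m => c m * μ (Set.Ioc (-(m:ℝ)-1) (-(m:ℝ))) with ha
    have ha_fin : ∀ m, a m < ⊤ := fun m =>
      lt_of_le_of_lt (mul_le_mul_left (hc_le_one m) _) (by simpa using hwin m)
    set N' : ℕ := max N 2 with hN'
    set r : ℝ≥0∞ := ENNReal.ofReal (Real.exp (-1/(2*(k:ℝ)))) with hr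
    have hrlt : r < 1 := by
      rw [hr, ← ENNReal.ofReal_one]
      apply ENNReal.ofReal_lt_ofReal_iff_of_nonneg (Real.exp_nonneg _) |>.2
      apply Real.exp_lt_one_iff.2
      have : (0:ℝ) < 2*(k:ℝ) := by linarith
      apply div_neg_of_neg_of_pos (by norm_num) this
    have htail : ∀ m : ℕ, N' ≤ m → a m ≤ r ^ m := by
      intro m hm
      have hm2 : 2 ≤ m := le_trans (le_max_right _ _) hm
      have hmN : N ≤ m + 1 := by
        have := le_trans (le_max_left _ _) hm; omega
      have hne : m ≠ 0 := by omega
      have hmR : (2:ℝ) ≤ (m:ℝ) := by exact_mod_cast hm2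
      have hμw : μ (Set.Ioc (-(m:ℝ)-1) (-(m:ℝ))) ≤
          ENNReal.ofReal (Real.exp ((1/(4*(k:ℝ))) * ((m:ℝ)+1)^2)) := by
        have hsub : Set.Ioc (-(m:ℝ)-1) (-(m:ℝ)) ⊆
            Set.Icc (-(((m+1):ℕ):ℝ)) (-(((m+1):ℕ):ℝ) + 1) := by
          intro y hy
          obtain ⟨hy1, hy2⟩ := hy
          push_cast
          constructor <;> linarith
        refine le_trans (measure_mono hsub) ?_
        have hfin := pm_finite_Icc hpm (-(((m+1):ℕ):ℝ)) (-(((m+1):ℕ):ℝ) + 1)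
        rw [← ENNReal.ofReal_toReal hfin.ne]
        apply ENNReal.ofReal_le_ofReal
        have := hN (m+1) hmN (by omega)
        calc (μ (Set.Icc (-(((m+1):ℕ):ℝ)) (-(((m+1):ℕ):ℝ) + 1))).toReal
            ≤ Real.exp ((1/(4*(k:ℝ))) * (((m+1):ℕ):ℝ)^2) := this
          _ = Real.exp ((1/(4*(k:ℝ))) * ((m:ℝ)+1)^2) := by push_cast; ring_nf
      have : a m ≤ ENNReal.ofReal (Real.exp (-(m:ℝ)^2/(k:ℝ))) *
          ENNReal.ofReal (Real.exp ((1/(4*(k:ℝ))) * ((m:ℝ)+1)^2)) := by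
        rw [ha]
        simp only [hc, if_neg hne]
        exact mul_le_mul_right hμw _
      refine le_trans this ?_
      rw [← ENNReal.ofReal_mul (Real.exp_nonneg _), ← Real.exp_add]
      have hexp : -(m:ℝ)^2/(k:ℝ) + (1/(4*(k:ℝ))) * ((m:ℝ)+1)^2 ≤ -(m:ℝ)/(2*(k:ℝ)) := by
        have h4k : (0:ℝ) < 4*(k:ℝ) := by linarith
        have e1 : -(m:ℝ)^2/(k:ℝ) + (1/(4*(k:ℝ))) * ((m:ℝ)+1)^2
            = ((-(m:ℝ)^2)*4 + ((m:ℝ)+1)^2)/(4*(k:ℝ)) := by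
          field_simp
        have e2 : -(m:ℝ)/(2*(k:ℝ)) = ((-(m:ℝ))*2)/(4*(k:ℝ)) := by
          field_simp
          ring
        rw [e1, e2, div_le_div_iff_of_pos_right h4k]
        nlinarith
      have hrpow : r ^ m = ENNReal.ofReal (Real.exp (-(m:ℝ)/(2*(k:ℝ)))) := by
        rw [hr, ← ENNReal.ofReal_pow (Real.exp_nonneg _), ← Real.exp_nat_mul]
        congr 1
        ring_nf
      rw [hrpow]
      exact ENNReal.ofReal_le_ofReal (Real.exp_le_exp.2 hexp)
    have hsplit := Summable.sum_add_tsum_nat_add' (f := a) (k := N') ENNReal.summable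
    rw [← hsplit]
    apply ENNReal.add_lt_top.2
    constructor
    · exact ENNReal.sum_lt_top.2 (fun i _ => ha_fin i)
    · calc ∑' i : ℕ, a (i + N') ≤ ∑' i : ℕ, r ^ (i + N') :=
          ENNReal.tsum_le_tsum (fun i => htail _ (by omega))
        _ ≤ ∑' i : ℕ, r ^ i * r ^ N' := by
            apply ENNReal.tsum_le_tsum
            intro i
            rw [pow_add]
        _ = (∑' i : ℕ, r ^ i) * r ^ N' := ENNReal.tsum_mul_right
        _ < ⊤ := by
            apply ENNReal.mul_lt_top
            · rw [ENNReal.tsum_geometric]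
              apply ENNReal.inv_lt_top.2
              exact tsub_pos_of_lt hrlt
            · exact lt_of_le_of_lt (pow_le_one' hrlt.le _) (by norm_num)
  -- conclude
  refine ⟨(alphaF_continuous k).aestronglyMeasurable, ?_⟩
  rw [hasFiniteIntegral_iff_ofReal (Eventually.of_forall (alphaF_nonneg k))]
  calc ∫⁻ x, ENNReal.ofReal (alphaF k x) ∂μ
      ≤ ∫⁻ x, ∑' m : ℕ, (Set.Ioc (-(m:ℝ)-1) (-(m:ℝ))).indicator (fun _ => c m) x ∂μ :=
        lintegral_mono hpt
    _ = ∑' m : ℕ, c m * μ (Set.Ioc (-(m:ℝ)-1) (-(m:ℝ))) := by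
        rw [lintegral_tsum (fun m => (measurable_const.indicator measurableSet_Ioc).aemeasurable)]
        congr 1
        ext m
        exact lintegral_indicator_const measurableSet_Ioc _
    _ < ⊤ := key

end IntegrabilityHelpers

section MoreHelpers
open scoped ENNReal

lemma urysohn (a b δ : ℝ) (hδ : 0 < δ) :
    ∃ h : ℝ → ℝ, Continuous h ∧ HasCompactSupport h ∧ (∀ x, 0 ≤ h x) ∧ (∀ x, h x ≤ 1) ∧
      (∀ x ∈ Set.Icc a b, h x = 1) ∧ (∀ x ∉ Set.Ioo (a-δ) (b+δ), h x = 0) := by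
  obtain ⟨f, hfs, hft, hfc, hf01⟩ := exists_continuous_one_zero_of_isCompact
    (isCompact_Icc (a := a) (b := b)) (isOpen_Ioo (a := a-δ) (b := b+δ)).isClosed_compl
    (Set.disjoint_left.2 (fun x hx hc => hc ⟨by linarith [hx.1], by linarith [hx.2]⟩))
  refine ⟨f, f.continuous, hfc, fun x => (hf01 x).1, fun x => (hf01 x).2, ?_, ?_⟩
  · intro x hx
    exact hfs hx
  · intro x hx
    exact hft hx

lemma integral_le_measure_toReal {μ : Measure ℝ} {h : ℝ → ℝ} {s : Set ℝ}
    (hfin : μ s < ⊤)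
    (h1 : ∀ x ∈ s, h x ≤ 1) (h0 : ∀ x ∉ s, h x ≤ 0) (hnn : ∀ x, 0 ≤ h x) :
    ∫ x, h x ∂μ ≤ (μ s).toReal := by
  have key := MeasureTheory.integral_le_measure (μ := μ) h1 (fun x hx => h0 x hx)
  rw [← ENNReal.ofReal_toReal hfin.ne] at key
  exact (ENNReal.ofReal_le_ofReal_iff ENNReal.toReal_nonneg).1 key

lemma measure_toReal_le_integral {μ : Measure ℝ} {h : ℝ → ℝ} {s : Set ℝ}
    (hs : MeasurableSet s) (hfin : μ s < ⊤) (hint : Integrable h μ)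
    (h1 : ∀ x ∈ s, 1 ≤ h x) (hnn : ∀ x, 0 ≤ h x) :
    (μ s).toReal ≤ ∫ x, h x ∂μ := by
  have hind : Integrable (s.indicator (fun _ => (1:ℝ))) μ := by
    rw [integrable_indicator_iff hs]
    exact integrableOn_const hfin.ne (by simp)
  have hle : ∀ x, s.indicator (fun _ => (1:ℝ)) x ≤ h x := by
    intro x
    by_cases hx : x ∈ s
    · rw [Set.indicator_of_mem hx]; exact h1 x hx
    · rw [Set.indicator_of_notMem hx]; exact hnn x
  calc (μ s).toReal = ∫ x, s.indicator (fun _ => (1:ℝ)) x ∂μ := by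
        rw [MeasureTheory.integral_indicator_const (1:ℝ) hs]; simp; rfl
    _ ≤ ∫ x, h x ∂μ := integral_mono hind hint hle

lemma le_of_tendsto_frequently {f : ℕ → ℝ} {L c : ℝ} (hf : Tendsto f atTop (nhds L))
    (h : ∃ᶠ n in atTop, c ≤ f n) : c ≤ L := by
  by_contra hc
  push_neg at hc
  have hev : ∀ᶠ n in atTop, f n < c := hf.eventually (gt_mem_nhds hc)
  obtain ⟨n, hn1, hn2⟩ := (h.and_eventually hev).exists
  linarith

lemma exists_Ici_ne_zero {μ : Measure ℝ} (hμ : μ ≠ 0) : ∃ x : ℝ, μ (Set.Ici x) ≠ 0 := by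
  by_contra hc
  push_neg at hc
  apply hμ
  have huniv : (Set.univ : Set ℝ) = ⋃ n : ℕ, Set.Ici (-(n:ℝ)) := by
    ext y
    simp only [Set.mem_univ, Set.mem_iUnion, Set.mem_Ici, true_iff]
    obtain ⟨n, hn⟩ := exists_nat_gt (-y)
    exact ⟨n, by linarith⟩
  have : μ Set.univ = 0 := by
    rw [huniv]
    exact measure_iUnion_null (fun n => hc _)
  exact Measure.measure_univ_eq_zero.1 this

lemma tendsto_of_windowC (t : ℕ → ℝ) (hnn : ∀ m, 0 ≤ t m)
    (h : ∀ k : ℕ, 1 ≤ k → ∃ C, 0 ≤ C ∧ ∀ m : ℕ, 3 ≤ m →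
      t m ≤ Real.exp (((m:ℝ)+1)^2/(k:ℝ)) * C) :
    Tendsto (fun m : ℕ => (1/(m:ℝ)^2) * Real.log (max (t m) 1)) atTop (nhds 0) := by
  rw [Metric.tendsto_atTop]
  intro ε hε
  obtain ⟨k', hk'⟩ := exists_nat_gt (4/ε)
  set k : ℕ := max k' 1 with hk
  have hk1 : 1 ≤ k := le_max_right _ _
  have hkR : (0:ℝ) < (k:ℝ) := by exact_mod_cast hk1
  have hkbig : 4/ε < (k:ℝ) := lt_of_lt_of_le hk' (by exact_mod_cast le_max_left _ _)
  have h2k : 2/(k:ℝ) < ε/2 := by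
    rw [div_lt_iff₀ hkR]
    rw [div_lt_iff₀ hε] at hkbig
    nlinarith
  obtain ⟨C, hC0, hC⟩ := h k hk1
  set L := Real.log (max C 1) with hL
  have hL0 : 0 ≤ L := Real.log_nonneg (le_max_right _ _)
  -- L / m^2 → 0
  have hLm : Tendsto (fun m : ℕ => L / (m:ℝ)^2) atTop (nhds 0) := by
    apply Tendsto.div_atTop tendsto_const_nhds
    exact (tendsto_pow_atTop (two_ne_zero)).comp tendsto_natCast_atTop_atTop
  have hev1 : ∀ᶠ m : ℕ in atTop, L / (m:ℝ)^2 < ε/4 :=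
    hLm.eventually (gt_mem_nhds (by positivity))
  have hev2 : ∀ᶠ m : ℕ in atTop, 3 ≤ m := eventually_ge_atTop 3
  obtain ⟨N, hN⟩ := eventually_atTop.1 (hev1.and hev2)
  refine ⟨N, fun m hm => ?_⟩
  obtain ⟨hm1, hm3⟩ := hN m hm
  have hmR : (3:ℝ) ≤ (m:ℝ) := by exact_mod_cast hm3
  have hm2 : (0:ℝ) < (m:ℝ)^2 := by positivity
  have hf0 : 0 ≤ (1/(m:ℝ)^2) * Real.log (max (t m) 1) := by
    apply mul_nonneg (by positivity)
    exact Real.log_nonneg (le_max_right _ _)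
  rw [Real.dist_eq, sub_zero, abs_of_nonneg hf0]
  -- bound the log
  have hA : (0:ℝ) ≤ ((m:ℝ)+1)^2/(k:ℝ) := by positivity
  have hexpA : (1:ℝ) ≤ Real.exp (((m:ℝ)+1)^2/(k:ℝ)) := Real.one_le_exp hA
  have hmax : max (t m) 1 ≤ Real.exp (((m:ℝ)+1)^2/(k:ℝ)) * max C 1 := by
    apply max_le
    · exact le_trans (hC m hm3) (mul_le_mul_of_nonneg_left (le_max_left _ _) (Real.exp_nonneg _))
    · calc (1:ℝ) ≤ Real.exp (((m:ℝ)+1)^2/(k:ℝ)) := hexpA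
        _ = Real.exp (((m:ℝ)+1)^2/(k:ℝ)) * 1 := (mul_one _).symm
        _ ≤ _ := mul_le_mul_of_nonneg_left (le_max_right _ _) (Real.exp_nonneg _)
  have hlog : Real.log (max (t m) 1) ≤ ((m:ℝ)+1)^2/(k:ℝ) + L := by
    calc Real.log (max (t m) 1) ≤ Real.log (Real.exp (((m:ℝ)+1)^2/(k:ℝ)) * max C 1) := by
          apply Real.log_le_log (lt_of_lt_of_le one_pos (le_max_right _ _)) hmax
      _ = ((m:ℝ)+1)^2/(k:ℝ) + L := by
          rw [Real.log_mul (Real.exp_ne_zero _) (by positivity), Real.log_exp, hL]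
  calc (1/(m:ℝ)^2) * Real.log (max (t m) 1) ≤ (1/(m:ℝ)^2) * (((m:ℝ)+1)^2/(k:ℝ) + L) := by
        apply mul_le_mul_of_nonneg_left hlog (by positivity)
    _ = ((m:ℝ)+1)^2/((m:ℝ)^2 * (k:ℝ)) + L/(m:ℝ)^2 := by field_simp
    _ ≤ 2/(k:ℝ) + L/(m:ℝ)^2 := by
        have : ((m:ℝ)+1)^2 ≤ 2 * (m:ℝ)^2 := by nlinarith
        have h1 : ((m:ℝ)+1)^2/((m:ℝ)^2 * (k:ℝ)) ≤ 2 * (m:ℝ)^2 / ((m:ℝ)^2 * (k:ℝ)) := by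
          rw [div_le_div_iff_of_pos_right (by positivity)]
          exact this
        have h2 : 2 * (m:ℝ)^2 / ((m:ℝ)^2 * (k:ℝ)) = 2/(k:ℝ) := by
          field_simp
        linarith [h1, h2.le]
    _ < ε/2 + ε/4 := by linarith
    _ < ε := by linarith
end MoreHelpers

/-- Lemma 3.1: vague convergence together with boundedness of the `α_k`-integrals and
non-degeneracy of the maxima implies membership in `𝓜₂` and `d₂`-convergence. -/
theorem vague_to_d2_convergence
    (ηn : ℕ → Measure ℝ) (η : Measure ℝ)
    (hn : ∀ n, MemM2 (ηn n)) (hη : IsPointMeasure η)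
    (hvague : VagueTendsto ηn η)
    (halpha : ∀ k : ℕ, 1 ≤ k → ∃ C : ℝ, ∀ n, ∫ x, alphaF k x ∂(ηn n) ≤ C)
    (hsup : ∃ M : ℝ, ∀ n, maxM (ηn n) ≤ M)
    (hnotminf : ∃ c : ℝ, ∃ᶠ n in atTop, c ≤ maxM (ηn n)) :
    MemM2 η ∧ D2Tendsto ηn η := by
  obtain ⟨M, hM⟩ := hsup
  obtain ⟨c0, hc0⟩ := hnotminf
  haveI : IsFiniteMeasureOnCompacts η := pm_fmoc hη
  have hIn : ∀ n, IsFiniteMeasureOnCompacts (ηn n) := fun n => pm_fmoc (hn n).1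
  have hnAbove : ∀ n, ∀ y, M < y → ηn n (Ici y) = 0 := fun n y hy =>
    Ici_zero_of_gt_max (hn n).1 (hn n).2.2.1 (lt_of_le_of_lt (hM n) hy)
  have hnIoi : ∀ n, ηn n (Ioi M) = 0 := fun n => Ioi_zero (fun z hz => hnAbove n z hz)
  -- η vanishes above M+2
  have hηIcc : ∀ b : ℝ, η (Icc (M+2) b) = 0 := by
    intro b
    obtain ⟨h, hc, hcs, hnn0, hle1, hK, hsupp⟩ := urysohn (M+2) b 1 one_pos
    have hzero : ∀ n, ∫ x, h x ∂(ηn n) = 0 := by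
      intro n
      haveI := hIn n
      have hle := integral_le_measure_toReal (μ := ηn n) (s := Ioi M)
        (by rw [hnIoi n]; exact ENNReal.zero_lt_top) (fun y _ => hle1 y)
        (fun y hy => le_of_eq (hsupp y (fun hmem => hy (by
          have := hmem.1; simp only [mem_Ioi]; linarith)))) hnn0
      rw [hnIoi n] at hle
      simp at hle
      exact le_antisymm hle (integral_nonneg hnn0)
    have htd := hvague h hc hcs hnn0
    have hconst : (fun n => ∫ x, h x ∂(ηn n)) = fun _ => (0:ℝ) := funext hzero
    rw [hconst] at htd
    have hzeroη : ∫ x, h x ∂η = 0 := tendsto_nhds_unique htd tendsto_const_nhds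
    have hto := measure_toReal_le_integral (μ := η) measurableSet_Icc
      (pm_finite_Icc hη _ _) (hc.integrable_of_hasCompactSupport hcs)
      (fun y hy => (hK y hy).ge) hnn0
    rw [hzeroη] at hto
    have h0' : (η (Icc (M+2) b)).toReal = 0 := le_antisymm hto ENNReal.toReal_nonneg
    have hfin := pm_finite_Icc hη (M+2) b
    rcases (ENNReal.toReal_eq_zero_iff _).1 h0' with h | h
    · exact h
    · exact absurd h hfin.ne
  have hηIci : η (Ici (M+2)) = 0 := by
    rw [Ici_eq_iUnion (M+2)]
    exact measure_iUnion_null (fun n => hηIcc _)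
  have hη0 : η (Ici 0) < ⊤ := by
    have hsub : Ici (0:ℝ) ⊆ Icc 0 (M+2) ∪ Ici (M+2) := fun y hy =>
      (le_or_gt y (M+2)).elim (fun h => Or.inl ⟨hy, h⟩) (fun h => Or.inr h.le)
    calc η (Ici 0) ≤ η (Icc 0 (M+2)) + η (Ici (M+2)) :=
          le_trans (measure_mono hsub) (measure_union_le _ _)
      _ < ⊤ := by
          rw [hηIci, add_zero]
          exact pm_finite_Icc hη 0 (M+2)
  have hSn : ∀ n, {x : ℝ | ηn n (Ici x) ≠ 0}.Nonempty := fun n => exists_Ici_ne_zero (hn n).2.1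
  have hBn : ∀ n, BddAbove {x : ℝ | ηn n (Ici x) ≠ 0} := fun n =>
    bddAbove_S (hn n).1 (hn n).2.2.1
  -- frequently mass in a fixed window
  have hfreq : ∃ᶠ n in atTop, 1 ≤ ηn n (Icc (c0-1) (M+1)) := by
    apply hc0.mono
    intro n hcn
    obtain ⟨x, hxS, hx⟩ := exists_lt_of_lt_csSup (hSn n)
      (show c0 - 1 < maxM (ηn n) from lt_of_lt_of_le (by linarith) hcn)
    have hIoin : ηn n (Ioi (M+1)) = 0 :=
      measure_mono_null (Ioi_subset_Ioi (by linarith)) (hnIoi n)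
    have hne : ηn n (Icc x (M+1)) ≠ 0 := by
      intro h0
      apply hxS
      have hsub : Ici x ⊆ Icc x (M+1) ∪ Ioi (M+1) := fun y hy =>
        (le_or_gt y (M+1)).elim (fun h => Or.inl ⟨hy, h⟩) (fun h => Or.inr h)
      have := (measure_mono (μ := ηn n) hsub).trans (measure_union_le (μ := ηn n) _ _)
      rw [h0, hIoin, add_zero] at this
      exact le_antisymm this zero_le
    calc (1:ℝ≥0∞) ≤ ηn n (Icc x (M+1)) := pm_one_le (hn n).1 hne
      _ ≤ ηn n (Icc (c0-1) (M+1)) := measure_mono (μ := ηn n) (Icc_subset_Icc_left hx.le)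
  have hηne : η ≠ 0 := by
    obtain ⟨h, hc, hcs, hnn0, hle1, hK, hsupp⟩ := urysohn (c0-1) (M+1) 1 one_pos
    have hfreq2 : ∃ᶠ n in atTop, (1:ℝ) ≤ ∫ x, h x ∂(ηn n) := by
      apply hfreq.mono
      intro n h1
      haveI := hIn n
      have hfin := pm_finite_Icc (hn n).1 (c0-1) (M+1)
      have h1R : (1:ℝ) ≤ (ηn n (Icc (c0-1) (M+1))).toReal := by
        have := ENNReal.toReal_mono hfin.ne h1
        simpa using this
      have := measure_toReal_le_integral measurableSet_Icc hfin
        (hc.integrable_of_hasCompactSupport hcs) (fun y hy => (hK y hy).ge) hnn0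
      linarith
    have h1η : (1:ℝ) ≤ ∫ x, h x ∂η :=
      le_of_tendsto_frequently (hvague h hc hcs hnn0) hfreq2
    intro h0
    rw [h0] at h1η
    simp at h1η
    linarith
  -- window bound for η
  have hwinC : ∀ k : ℕ, 1 ≤ k → ∃ C, 0 ≤ C ∧ ∀ m : ℕ, 3 ≤ m →
      (η (Icc (-(m:ℝ)) (-(m:ℝ)+1))).toReal ≤ Real.exp (((m:ℝ)+1)^2/(k:ℝ)) * C := by
    intro k hk
    obtain ⟨C, hC⟩ := halpha k hk
    have hC0 : 0 ≤ C := le_trans (integral_nonneg (alphaF_nonneg k)) (hC 0)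
    refine ⟨C, hC0, ?_⟩
    intro m hm3
    have hmR : (3:ℝ) ≤ (m:ℝ) := by exact_mod_cast hm3
    obtain ⟨h, hc, hcs, hnn0, hle1, hK, hsupp⟩ := urysohn (-(m:ℝ)) (-(m:ℝ)+1) (1/2) (by norm_num)
    have hpt : ∀ x, h x ≤ Real.exp (((m:ℝ)+1)^2/(k:ℝ)) * alphaF k x := by
      intro x
      by_cases hx : x ∈ Set.Ioo (-(m:ℝ)-1/2) ((-(m:ℝ)+1)+1/2)
      · obtain ⟨hx1, hx2⟩ := hx
        have hxle : x ≤ -1 := by linarith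
        have hxge : -((m:ℝ)+1) ≤ x := by linarith
        have hαb := le_alphaF (k := k) (m := (m:ℝ)+1) hk hxle hxge
        have hee : ((m:ℝ)+1)^2/(k:ℝ) + -((m:ℝ)+1)^2/(k:ℝ) = 0 := by ring
        calc h x ≤ 1 := hle1 x
          _ = Real.exp (((m:ℝ)+1)^2/(k:ℝ)) * Real.exp (-((m:ℝ)+1)^2/(k:ℝ)) := by
              rw [← Real.exp_add, hee, Real.exp_zero]
          _ ≤ _ := mul_le_mul_of_nonneg_left hαb (Real.exp_nonneg _)
      · rw [hsupp x hx]
        exact mul_nonneg (Real.exp_nonneg _) (alphaF_nonneg k x)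
    have hbound : ∀ n, ∫ x, h x ∂(ηn n) ≤ Real.exp (((m:ℝ)+1)^2/(k:ℝ)) * C := by
      intro n
      haveI := hIn n
      have hIh : Integrable h (ηn n) := hc.integrable_of_hasCompactSupport hcs
      have hIa : Integrable (alphaF k) (ηn n) := alphaF_integrable (hn n).1 (hn n).2.2.2 hk
      calc ∫ x, h x ∂(ηn n) ≤ ∫ x, Real.exp (((m:ℝ)+1)^2/(k:ℝ)) * alphaF k x ∂(ηn n) :=
            integral_mono hIh (hIa.const_mul _) hpt
        _ = Real.exp (((m:ℝ)+1)^2/(k:ℝ)) * ∫ x, alphaF k x ∂(ηn n) := integral_const_mul _ _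
        _ ≤ Real.exp (((m:ℝ)+1)^2/(k:ℝ)) * C :=
            mul_le_mul_of_nonneg_left (hC n) (Real.exp_nonneg _)
    have hlim : ∫ x, h x ∂η ≤ Real.exp (((m:ℝ)+1)^2/(k:ℝ)) * C :=
      le_of_tendsto (hvague h hc hcs hnn0) (Eventually.of_forall hbound)
    calc (η (Icc (-(m:ℝ)) (-(m:ℝ)+1))).toReal ≤ ∫ x, h x ∂η :=
          measure_toReal_le_integral measurableSet_Icc (pm_finite_Icc hη _ _)
            (hc.integrable_of_hasCompactSupport hcs) (fun y hy => (hK y hy).ge) hnn0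
      _ ≤ _ := hlim
  have hηtd : Tendsto (fun m : ℕ => (1 / (m : ℝ) ^ 2) *
      Real.log (max ((η (Set.Icc (-(m:ℝ)) (-(m:ℝ) + 1))).toReal) 1)) atTop (nhds 0) := by
    have := tendsto_of_windowC (fun m => (η (Icc (-(m:ℝ)) (-(m:ℝ)+1))).toReal)
      (fun m => ENNReal.toReal_nonneg) hwinC
    simpa using this
  have hmem : MemM2 η := ⟨hη, hηne, hη0, hηtd⟩
  have hSη : {x : ℝ | η (Ici x) ≠ 0}.Nonempty := exists_Ici_ne_zero hηne
  have hBη : BddAbove {x : ℝ | η (Ici x) ≠ 0} := bddAbove_S hη hη0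
  refine ⟨hmem, hvague, ?_, ?_⟩
  · -- maxM convergence
    rw [Metric.tendsto_atTop]
    intro ε hε
    set a := maxM η with ha
    have hlow : ∀ᶠ n in atTop, a - ε/2 ≤ maxM (ηn n) := by
      obtain ⟨x, hxS, hx⟩ := exists_lt_of_lt_csSup hSη
        (show a - ε/4 < a from by linarith)
      have hIoi : η (Ioi a) = 0 := Ioi_zero (fun z hz => Ici_zero_of_gt_max hη hη0 hz)
      have hxa : x ≤ a := le_csSup hBη hxS
      have hKne : η (Icc x a) ≠ 0 := by
        intro h0
        apply hxS
        have hsub : Ici x ⊆ Icc x a ∪ Ioi a := fun y hy =>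
          (le_or_gt y a).elim (fun h => Or.inl ⟨hy, h⟩) (fun h => Or.inr h)
        have := (measure_mono (μ := η) hsub).trans (measure_union_le (μ := η) _ _)
        rw [h0, hIoi, add_zero] at this
        exact le_antisymm this zero_le
      have hK1 : 1 ≤ η (Icc x a) := pm_one_le hη hKne
      obtain ⟨h, hc, hcs, hnn0, hle1, hKeq, hsupp⟩ := urysohn x a (ε/4) (by linarith)
      have hint1 : (1:ℝ) ≤ ∫ y, h y ∂η := by
        have hfin := pm_finite_Icc hη x a
        have hto := measure_toReal_le_integral measurableSet_Icc hfin
          (hc.integrable_of_hasCompactSupport hcs) (fun y hy => (hKeq y hy).ge) hnn0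
        have h1R : (1:ℝ) ≤ (η (Icc x a)).toReal := by
          have := ENNReal.toReal_mono hfin.ne hK1
          simpa using this
        linarith
      have hev : ∀ᶠ n in atTop, 1/2 < ∫ y, h y ∂(ηn n) :=
        (hvague h hc hcs hnn0).eventually (eventually_gt_nhds (by linarith))
      apply hev.mono
      intro n hn2
      haveI := hIn n
      have hfinIoo : ηn n (Ioo (x-ε/4) (a+ε/4)) < ⊤ :=
        lt_of_le_of_lt (measure_mono Ioo_subset_Icc_self) (pm_finite_Icc (hn n).1 _ _)
      have hle := integral_le_measure_toReal hfinIoo (fun y _ => hle1 y)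
        (fun y hy => (hsupp y hy).le) hnn0
      have hne : ηn n (Ici (x - ε/4)) ≠ 0 := by
        intro h0
        have hz : ηn n (Ioo (x-ε/4) (a+ε/4)) = 0 :=
          measure_mono_null (fun y hy => le_of_lt hy.1) h0
        rw [hz] at hle
        simp at hle
        linarith
      have hle2 := le_csSup (hBn n) (show x - ε/4 ∈ {z : ℝ | ηn n (Ici z) ≠ 0} from hne)
      have hle3 : x - ε/4 ≤ maxM (ηn n) := hle2
      linarith
    have hup : ∀ᶠ n in atTop, maxM (ηn n) ≤ a + ε/2 := by
      rcases lt_or_ge M (a + ε/2) with hMa | hMa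
      · exact Eventually.of_forall (fun n => le_trans (hM n) hMa.le)
      · obtain ⟨h, hc, hcs, hnn0, hle1, hKeq, hsupp⟩ := urysohn (a+ε/2) (M+1) (ε/4) (by linarith)
        have hη0' : ∫ y, h y ∂η = 0 := by
          have hIoiη : η (Ioi (a + ε/4)) = 0 :=
            Ioi_zero (fun z hz => Ici_zero_of_gt_max hη hη0 (by linarith))
          have hle := integral_le_measure_toReal (μ := η) (s := Ioi (a+ε/4))
            (by rw [hIoiη]; exact ENNReal.zero_lt_top) (fun y _ => hle1 y)
            (fun y hy => le_of_eq (hsupp y (fun hmem => hy (by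
              have := hmem.1
              simp only [mem_Ioi]
              linarith)))) hnn0
          rw [hIoiη] at hle
          simp at hle
          exact le_antisymm hle (integral_nonneg hnn0)
        have hev : ∀ᶠ n in atTop, ∫ y, h y ∂(ηn n) < 1 :=
          (hvague h hc hcs hnn0).eventually (eventually_lt_nhds (by rw [hη0']; norm_num))
        apply hev.mono
        intro n hn2
        haveI := hIn n
        have hfin := pm_finite_Icc (hn n).1 (a+ε/2) (M+1)
        have hto := measure_toReal_le_integral measurableSet_Icc hfin
          (hc.integrable_of_hasCompactSupport hcs) (fun y hy => (hKeq y hy).ge) hnn0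
        obtain ⟨j, hj⟩ := pm_nat_Icc (hn n).1 (a+ε/2) (M+1)
        have hj0 : j = 0 := by
          by_contra hjne
          have h1j : (1:ℝ) ≤ ((j:ℝ≥0∞)).toReal := by
            rw [ENNReal.toReal_natCast]
            exact_mod_cast Nat.one_le_iff_ne_zero.2 hjne
          rw [hj] at hto
          linarith
        have hKz : ηn n (Icc (a+ε/2) (M+1)) = 0 := by rw [hj, hj0]; simp
        by_contra hgt
        push_neg at hgt
        have hgt' : a + ε/2 < sSup {x : ℝ | ηn n (Ici x) ≠ 0} := hgt
        obtain ⟨x, hxS, hx⟩ := exists_lt_of_lt_csSup (hSn n) hgt'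
        have hIoin : ηn n (Ioi (M+1)) = 0 :=
          measure_mono_null (Ioi_subset_Ioi (by linarith)) (hnIoi n)
        have hne : ηn n (Icc x (M+1)) ≠ 0 := by
          intro h0
          apply hxS
          have hsub : Ici x ⊆ Icc x (M+1) ∪ Ioi (M+1) := fun y hy =>
            (le_or_gt y (M+1)).elim (fun h => Or.inl ⟨hy, h⟩) (fun h => Or.inr h)
          have := (measure_mono (μ := ηn n) hsub).trans (measure_union_le (μ := ηn n) _ _)
          rw [h0, hIoin, add_zero] at this
          exact le_antisymm this zero_le
        exact hne (measure_mono_null (Icc_subset_Icc_left hx.le) hKz)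
    obtain ⟨N1, h1⟩ := eventually_atTop.1 hlow
    obtain ⟨N2, h2⟩ := eventually_atTop.1 hup
    refine ⟨max N1 N2, fun n hn' => ?_⟩
    have l1 := h1 n (le_trans (le_max_left _ _) hn')
    have l2 := h2 n (le_trans (le_max_right _ _) hn')
    rw [Real.dist_eq, abs_lt]
    constructor <;> linarith
  · -- alphaF convergence
    intro k hk
    have hIaη : Integrable (alphaF k) η := alphaF_integrable hη hηtd hk
    have hk2 : 1 ≤ 2*k := by omega
    have hIa2η : Integrable (alphaF (2*k)) η := alphaF_integrable hη hηtd hk2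
    obtain ⟨C2, hC2⟩ := halpha (2*k) hk2
    have hC20 : 0 ≤ C2 := le_trans (integral_nonneg (alphaF_nonneg _)) (hC2 0)
    set D := ∫ x, alphaF (2*k) x ∂η with hD
    have hD0 : 0 ≤ D := integral_nonneg (alphaF_nonneg _)
    rw [Metric.tendsto_atTop]
    intro ε hε
    set E := C2 + D + 1 with hE
    have hE0 : 0 < E := by linarith
    have hkR : (0:ℝ) < (k:ℝ) := by exact_mod_cast hk
    set r : ℝ := Real.exp (-1/(2*(k:ℝ))) with hr
    have hr0 : 0 ≤ r := Real.exp_nonneg _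
    have hr1 : r < 1 := by
      rw [hr]
      apply Real.exp_lt_one_iff.2
      apply div_neg_of_neg_of_pos (by norm_num) (by linarith)
    obtain ⟨m, hm1, hmE⟩ : ∃ m : ℕ, 1 ≤ m ∧ Real.exp (-(m:ℝ)^2/(2*(k:ℝ))) * E < ε/3 := by
      have htd := tendsto_pow_atTop_nhds_zero_of_lt_one hr0 hr1
      have := htd.eventually (gt_mem_nhds (show (0:ℝ) < (ε/3)/E from by positivity))
      obtain ⟨m0, hm0⟩ := eventually_atTop.1 this
      set m := max m0 1 with hmdef
      refine ⟨m, le_max_right _ _, ?_⟩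
      have hrm := hm0 m (le_max_left _ _)
      have hmR : (1:ℝ) ≤ (m:ℝ) := by exact_mod_cast le_max_right m0 1
      have hexple : Real.exp (-(m:ℝ)^2/(2*(k:ℝ))) ≤ r^m := by
        have : r^m = Real.exp ((m:ℝ) * (-1/(2*(k:ℝ)))) := by
          rw [← Real.exp_nat_mul]
        rw [this]
        apply Real.exp_le_exp.2
        have h2k : (0:ℝ) < 2*(k:ℝ) := by linarith
        have he : (m:ℝ) * (-1/(2*(k:ℝ))) = -(m:ℝ)/(2*(k:ℝ)) := by ring
        rw [he, div_le_div_iff_of_pos_right h2k]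
        nlinarith
      have : Real.exp (-(m:ℝ)^2/(2*(k:ℝ))) < (ε/3)/E := lt_of_le_of_lt hexple hrm
      calc Real.exp (-(m:ℝ)^2/(2*(k:ℝ))) * E < ((ε/3)/E) * E :=
            mul_lt_mul_of_pos_right this hE0
        _ = ε/3 := by field_simp
    obtain ⟨χ, hχc, hχcs, hχ0, hχ1, hχK, hχsupp⟩ := urysohn (-(m:ℝ)) 0 1 one_pos
    set g := fun x => χ x * alphaF k x with hg
    have hgc : Continuous g := hχc.mul (alphaF_continuous k)
    have hgcs : HasCompactSupport g := hχcs.mul_right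
    have hg0 : ∀ x, 0 ≤ g x := fun x => mul_nonneg (hχ0 x) (alphaF_nonneg k x)
    have hdiff : ∀ x, 0 ≤ alphaF k x - g x ∧
        alphaF k x - g x ≤ Real.exp (-(m:ℝ)^2/(2*(k:ℝ))) * alphaF (2*k) x := by
      intro x
      have hgle : g x ≤ alphaF k x := by
        calc g x = χ x * alphaF k x := rfl
          _ ≤ 1 * alphaF k x := mul_le_mul_of_nonneg_right (hχ1 x) (alphaF_nonneg k x)
          _ = alphaF k x := one_mul _
      refine ⟨by linarith, ?_⟩
      rcases le_or_gt x (-(m:ℝ)) with hx | hx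
      · have h1 : alphaF k x - g x ≤ alphaF k x := by
          have := hg0 x
          linarith
        exact le_trans h1 (alphaF_tail hk hx (by exact_mod_cast hm1))
      · have hRHS : 0 ≤ Real.exp (-(m:ℝ)^2/(2*(k:ℝ))) * alphaF (2*k) x :=
          mul_nonneg (Real.exp_nonneg _) (alphaF_nonneg _ _)
        rcases le_or_gt x 0 with hx0 | hx0
        · have hχx : χ x = 1 := hχK x ⟨hx.le, hx0⟩
          have : alphaF k x - g x = 0 := by
            simp only [hg, hχx, one_mul, sub_self]
          rw [this]
          exact hRHS
        · have hα : alphaF k x = 0 := alphaF_zero_of_nonneg k hx0.le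
          have hgnn := hg0 x
          have : alphaF k x - g x ≤ 0 := by rw [hα]; linarith
          linarith
    have key : ∀ (μ : Measure ℝ), IsFiniteMeasureOnCompacts μ → Integrable (alphaF k) μ →
        Integrable (alphaF (2*k)) μ →
        0 ≤ (∫ x, alphaF k x ∂μ) - ∫ x, g x ∂μ ∧
        (∫ x, alphaF k x ∂μ) - ∫ x, g x ∂μ ≤
          Real.exp (-(m:ℝ)^2/(2*(k:ℝ))) * ∫ x, alphaF (2*k) x ∂μ := by
      intro μ hμFC hI1 hI2
      haveI := hμFC
      have hIg : Integrable g μ := hgc.integrable_of_hasCompactSupport hgcs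
      have hsub : (∫ x, alphaF k x ∂μ) - ∫ x, g x ∂μ = ∫ x, (alphaF k x - g x) ∂μ :=
        (integral_sub hI1 hIg).symm
      constructor
      · rw [hsub]
        exact integral_nonneg (fun x => (hdiff x).1)
      · rw [hsub]
        calc ∫ x, (alphaF k x - g x) ∂μ
            ≤ ∫ x, Real.exp (-(m:ℝ)^2/(2*(k:ℝ))) * alphaF (2*k) x ∂μ :=
              integral_mono (hI1.sub hIg) (hI2.const_mul _) (fun x => (hdiff x).2)
          _ = Real.exp (-(m:ℝ)^2/(2*(k:ℝ))) * ∫ x, alphaF (2*k) x ∂μ := integral_const_mul _ _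
    have hgv := hvague g hgc hgcs hg0
    obtain ⟨N, hN⟩ := Metric.tendsto_atTop.1 hgv (ε/3) (by positivity)
    refine ⟨N, fun n hn' => ?_⟩
    have h3 : -(ε/3) < (∫ x, g x ∂(ηn n)) - ∫ x, g x ∂η ∧
        (∫ x, g x ∂(ηn n)) - ∫ x, g x ∂η < ε/3 := by
      have := hN n hn'
      rw [Real.dist_eq] at this
      exact abs_lt.1 this
    haveI := hIn n
    have k1 := key (ηn n) (hIn n) (alphaF_integrable (hn n).1 (hn n).2.2.2 hk)
      (alphaF_integrable (hn n).1 (hn n).2.2.2 hk2)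
    have k2 := key η (pm_fmoc hη) hIaη hIa2η
    have b1 : (∫ x, alphaF k x ∂(ηn n)) - ∫ x, g x ∂(ηn n) < ε/3 := by
      refine lt_of_le_of_lt (le_trans k1.2 ?_) hmE
      have hle : ∫ x, alphaF (2*k) x ∂(ηn n) ≤ E := by
        have := hC2 n
        rw [hE]
        linarith
      exact mul_le_mul_of_nonneg_left hle (Real.exp_nonneg _)
    have b2 : (∫ x, alphaF k x ∂η) - ∫ x, g x ∂η < ε/3 := by
      refine lt_of_le_of_lt (le_trans k2.2 ?_) hmE
      have hle : D ≤ E := by rw [hE]; linarith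
      exact mul_le_mul_of_nonneg_left hle (Real.exp_nonneg _)
    rw [Real.dist_eq, abs_lt]
    have e1 := k1.1
    have e2 := k2.1
    constructor <;> linarith

end
end

section
/- Let η be a locally finite Borel measure on ℝ. Then the following are equivalent: (i) lim_{m→∞} (1/m²)·log(max(η([-m,-m+1]), 1)) = 0, the limit taken over positive integers m; (ii) for every λ > 0, ∫_{(-∞,0]} e^{-λx²} η(dx) < ∞. -/
open MeasureTheory Filter Set

noncomputable section

lemma aux_summable_exp (l : ℝ) (hl : 0 < l) :
    Summable (fun m : ℕ => Real.exp (-l * (m : ℝ) ^ 2 + (l / 2) * ((m : ℝ) + 1) ^ 2)) := by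
  apply summable_of_ratio_norm_eventually_le (r := 1/2) (by norm_num)
  have hlin : Tendsto (fun m : ℕ => -l * (m : ℝ) + l / 2) atTop atBot := by
    apply Tendsto.atBot_add _ tendsto_const_nhds
    exact Tendsto.const_mul_atTop_of_neg (by linarith) tendsto_natCast_atTop_atTop
  have hev : ∀ᶠ m : ℕ in atTop,
      -l * (m : ℝ) + l / 2 ≤ Real.log (1/2) := hlin.eventually_le_atBot _
  filter_upwards [hev] with m hm
  rw [Real.norm_of_nonneg (Real.exp_nonneg _), Real.norm_of_nonneg (Real.exp_nonneg _)]
  rw [← Real.exp_log (x := (1:ℝ)/2) (by norm_num), ← Real.exp_add]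
  apply Real.exp_le_exp.2
  push_cast
  nlinarith [hm]

set_option maxHeartbeats 1000000 in
/-- For a locally finite Borel measure `η` on `ℝ`, the subgaussian growth condition
`(1/m²)·log(max(η([-m,-m+1]),1)) → 0` is equivalent to
`∫_{(-∞,0]} e^{-λx²} η(dx) < ∞` for every `λ > 0`. -/
theorem subgaussian_growth_iff_gaussian_integrability
    (η : Measure ℝ) [IsLocallyFiniteMeasure η] :
    Tendsto (fun m : ℕ =>
        (1 / (m : ℝ) ^ 2) *
          Real.log (max ((η (Set.Icc (-(m:ℝ)) (-(m:ℝ) + 1))).toReal) 1))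
      atTop (nhds 0)
    ↔
    ∀ l : ℝ, 0 < l →
      (∫⁻ x in Set.Iic (0:ℝ), ENNReal.ofReal (Real.exp (-l * x ^ 2)) ∂η) < ⊤ := by
  have hfin : ∀ m : ℕ, η (Set.Icc (-(m:ℝ)) (-(m:ℝ) + 1)) < ⊤ :=
    fun m => isCompact_Icc.measure_lt_top
  have hfin' : ∀ m : ℕ, η (Set.Icc (-((m:ℝ)+1)) (-(m:ℝ))) < ⊤ :=
    fun m => isCompact_Icc.measure_lt_top
  constructor
  · intro h l hl
    -- from the limit, get a bound on the tail
    have hev : ∀ᶠ m : ℕ in atTop,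
        (1 / (m : ℝ) ^ 2) *
          Real.log (max ((η (Set.Icc (-(m:ℝ)) (-(m:ℝ) + 1))).toReal) 1) < l / 2 :=
      h.eventually_lt_const (by linarith)
    obtain ⟨N₀, hN₀⟩ := eventually_atTop.1 hev
    set N := max N₀ 1 with hN
    -- for m ≥ N, η([-m,-m+1]) ≤ exp((l/2) m²)
    have hbound : ∀ m : ℕ, N ≤ m →
        (η (Set.Icc (-(m:ℝ)) (-(m:ℝ) + 1))).toReal ≤ Real.exp ((l/2) * (m:ℝ)^2) := by
      intro m hm
      have hm1 : 1 ≤ m := le_trans (le_max_right _ _) hm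
      have hmpos : (0:ℝ) < (m:ℝ)^2 := by positivity
      have := hN₀ m (le_trans (le_max_left _ _) hm)
      have hlog : Real.log (max ((η (Set.Icc (-(m:ℝ)) (-(m:ℝ) + 1))).toReal) 1)
          ≤ (l/2) * (m:ℝ)^2 := by
        rw [div_mul_eq_mul_div, one_mul] at this
        have := (div_lt_iff₀ hmpos).1 this
        linarith
      calc (η (Set.Icc (-(m:ℝ)) (-(m:ℝ) + 1))).toReal
          ≤ max ((η (Set.Icc (-(m:ℝ)) (-(m:ℝ) + 1))).toReal) 1 := le_max_left _ _
        _ = Real.exp (Real.log (max ((η (Set.Icc (-(m:ℝ)) (-(m:ℝ) + 1))).toReal) 1)) := by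
            rw [Real.exp_log]; positivity
        _ ≤ Real.exp ((l/2) * (m:ℝ)^2) := Real.exp_le_exp.2 hlog
    -- cover Iic 0 by the intervals [-(m+1), -m]
    have hcover : Set.Iic (0:ℝ) ⊆ ⋃ m : ℕ, Set.Icc (-((m:ℝ)+1)) (-(m:ℝ)) := by
      intro x hx
      simp only [Set.mem_Iic] at hx
      refine Set.mem_iUnion.2 ⟨⌊-x⌋₊, ?_⟩
      have h1 : (⌊-x⌋₊ : ℝ) ≤ -x := Nat.floor_le (by linarith)
      have h2 : -x < (⌊-x⌋₊ : ℝ) + 1 := Nat.lt_floor_add_one _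
      simp only [Set.mem_Icc]; constructor <;> linarith
    set b : ℕ → ENNReal := fun m =>
      ENNReal.ofReal (Real.exp (-l * (m:ℝ)^2)) * η (Set.Icc (-((m:ℝ)+1)) (-(m:ℝ))) with hb
    have hmain : (∫⁻ x in Set.Iic (0:ℝ), ENNReal.ofReal (Real.exp (-l * x ^ 2)) ∂η)
        ≤ ∑' m : ℕ, b m := by
      calc (∫⁻ x in Set.Iic (0:ℝ), ENNReal.ofReal (Real.exp (-l * x ^ 2)) ∂η)
          ≤ ∫⁻ x in ⋃ m : ℕ, Set.Icc (-((m:ℝ)+1)) (-(m:ℝ)),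
              ENNReal.ofReal (Real.exp (-l * x ^ 2)) ∂η := lintegral_mono_set hcover
        _ ≤ ∑' m : ℕ, ∫⁻ x in Set.Icc (-((m:ℝ)+1)) (-(m:ℝ)),
              ENNReal.ofReal (Real.exp (-l * x ^ 2)) ∂η := lintegral_iUnion_le _ _
        _ ≤ ∑' m : ℕ, b m := by
            apply ENNReal.tsum_le_tsum
            intro m
            rw [hb]
            calc ∫⁻ x in Set.Icc (-((m:ℝ)+1)) (-(m:ℝ)),
                  ENNReal.ofReal (Real.exp (-l * x ^ 2)) ∂η
                ≤ ∫⁻ _ in Set.Icc (-((m:ℝ)+1)) (-(m:ℝ)),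
                  ENNReal.ofReal (Real.exp (-l * (m:ℝ)^2)) ∂η := by
                  apply setLIntegral_mono measurable_const
                  intro x hx
                  apply ENNReal.ofReal_le_ofReal
                  apply Real.exp_le_exp.2
                  obtain ⟨hx1, hx2⟩ := hx
                  have hm0 : (0:ℝ) ≤ (m:ℝ) := Nat.cast_nonneg m
                  nlinarith [mul_nonneg (show (0:ℝ) ≤ -(x + (m:ℝ)) by linarith)
                    (show (0:ℝ) ≤ (m:ℝ) - x by linarith)]
              _ = ENNReal.ofReal (Real.exp (-l * (m:ℝ)^2)) *
                  η (Set.Icc (-((m:ℝ)+1)) (-(m:ℝ))) := by rw [setLIntegral_const]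
    refine lt_of_le_of_lt hmain ?_
    -- split the sum at N
    rw [← Summable.sum_add_tsum_nat_add' (k := N) ENNReal.summable]
    apply ENNReal.add_lt_top.2
    constructor
    · apply ENNReal.sum_lt_top.2
      intro m _
      exact ENNReal.mul_lt_top ENNReal.ofReal_lt_top (hfin' m)
    · -- tail: b (m + N) ≤ ofReal (exp (-l (m+N)² + (l/2)(m+N+1)²))
      have htail : ∀ m : ℕ, b (m + N) ≤
          ENNReal.ofReal (Real.exp (-l * ((m+N : ℕ) : ℝ)^2 + (l/2) * (((m+N:ℕ):ℝ)+1)^2)) := by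
        intro m
        rw [hb, Real.exp_add, ENNReal.ofReal_mul (Real.exp_nonneg _)]
        apply mul_le_mul_right
        have hkey : Set.Icc (-(((m+N:ℕ):ℝ)+1)) (-((m+N:ℕ):ℝ))
            = Set.Icc (-(((m+N+1:ℕ)):ℝ)) (-((m+N+1:ℕ):ℝ) + 1) := by
          congr 1 <;> push_cast <;> ring
        rw [hkey]
        have h1 := hbound (m+N+1) (by omega)
        rw [← ENNReal.ofReal_toReal (hfin (m+N+1)).ne]
        apply ENNReal.ofReal_le_ofReal
        exact le_trans h1 (le_of_eq (by push_cast; ring))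
      calc ∑' m : ℕ, b (m + N)
          ≤ ∑' m : ℕ, ENNReal.ofReal
            (Real.exp (-l * ((m+N : ℕ) : ℝ)^2 + (l/2) * (((m+N:ℕ):ℝ)+1)^2)) :=
            ENNReal.tsum_le_tsum htail
        _ = ENNReal.ofReal (∑' m : ℕ,
            Real.exp (-l * ((m+N : ℕ) : ℝ)^2 + (l/2) * (((m+N:ℕ):ℝ)+1)^2)) := by
            rw [ENNReal.ofReal_tsum_of_nonneg (fun n => Real.exp_nonneg _)]
            exact (summable_nat_add_iff N).2 (aux_summable_exp l hl)
        _ < ⊤ := ENNReal.ofReal_lt_top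
  · intro h
    apply tendsto_order.2
    constructor
    · intro a ha
      apply Filter.Eventually.of_forall
      intro m
      have h1 : (0:ℝ) ≤ Real.log (max ((η (Set.Icc (-(m:ℝ)) (-(m:ℝ) + 1))).toReal) 1) :=
        Real.log_nonneg (le_max_right _ _)
      have h2 : (0:ℝ) ≤ 1 / (m:ℝ)^2 := by positivity
      nlinarith
    · intro ε hε
      have hC := h (ε/2) (by linarith)
      set C := (∫⁻ x in Set.Iic (0:ℝ), ENNReal.ofReal (Real.exp (-(ε/2) * x ^ 2)) ∂η).toReal
        with hCdef
      have hK : (0:ℝ) ≤ Real.log (max C 1) := Real.log_nonneg (le_max_right _ _)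
      -- key inequality for m ≥ 1
      have hkey : ∀ m : ℕ, 1 ≤ m →
          (η (Set.Icc (-(m:ℝ)) (-(m:ℝ) + 1))).toReal ≤ C * Real.exp ((ε/2) * (m:ℝ)^2) := by
        intro m hm
        have hsub : Set.Icc (-(m:ℝ)) (-(m:ℝ) + 1) ⊆ Set.Iic (0:ℝ) := by
          intro x hx
          have hm1 : (1:ℝ) ≤ (m:ℝ) := by exact_mod_cast hm
          simp only [Set.mem_Icc] at hx
          simp only [Set.mem_Iic]
          linarith [hx.2]
        have hineq : ENNReal.ofReal (Real.exp (-(ε/2) * (m:ℝ)^2)) *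
            η (Set.Icc (-(m:ℝ)) (-(m:ℝ) + 1))
            ≤ ∫⁻ x in Set.Iic (0:ℝ), ENNReal.ofReal (Real.exp (-(ε/2) * x ^ 2)) ∂η := by
          rw [← setLIntegral_const]
          refine le_trans ?_ (lintegral_mono_set hsub)
          apply setLIntegral_mono
          · exact (Real.measurable_exp.comp ((measurable_id.pow_const 2).const_mul
              (-(ε/2)))).ennreal_ofReal
          · intro x hx
            apply ENNReal.ofReal_le_ofReal
            apply Real.exp_le_exp.2
            obtain ⟨hx1, hx2⟩ := hx
            have hm1 : (1:ℝ) ≤ (m:ℝ) := by exact_mod_cast hm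
            nlinarith [mul_nonneg (show (0:ℝ) ≤ (m:ℝ) - x by linarith)
              (show (0:ℝ) ≤ (m:ℝ) + x by linarith), hε]
        have := ENNReal.toReal_mono hC.ne hineq
        rw [ENNReal.toReal_mul, ENNReal.toReal_ofReal (Real.exp_nonneg _)] at this
        rw [← hCdef] at this
        have hexp : (0:ℝ) < Real.exp (-(ε/2) * (m:ℝ)^2) := Real.exp_pos _
        calc (η (Set.Icc (-(m:ℝ)) (-(m:ℝ) + 1))).toReal
            = (Real.exp (-(ε/2) * (m:ℝ)^2) * (η (Set.Icc (-(m:ℝ)) (-(m:ℝ) + 1))).toReal)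
              / Real.exp (-(ε/2) * (m:ℝ)^2) := by field_simp
          _ ≤ C / Real.exp (-(ε/2) * (m:ℝ)^2) := by
              exact div_le_div_of_nonneg_right this hexp.le
          _ = C * Real.exp ((ε/2) * (m:ℝ)^2) := by
              rw [div_eq_mul_inv, ← Real.exp_neg]
              ring_nf
      -- choose M large
      obtain ⟨M₀, hM₀⟩ := exists_nat_gt (2 * Real.log (max C 1) / ε)
      refine eventually_atTop.2 ⟨max (M₀ + 1) 1, ?_⟩
      intro m hm
      have hm1 : 1 ≤ m := le_trans (le_max_right _ _) hm
      have hmM : (M₀ : ℝ) < (m : ℝ) := by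
        have : M₀ + 1 ≤ m := le_trans (le_max_left _ _) hm
        exact_mod_cast Nat.lt_of_succ_le this
      have hm1R : (1:ℝ) ≤ (m:ℝ) := by exact_mod_cast hm1
      have hmpos : (0:ℝ) < (m:ℝ)^2 := by positivity
      have hb := hkey m hm1
      have hexp1 : (1:ℝ) ≤ Real.exp ((ε/2) * (m:ℝ)^2) := by
        rw [← Real.exp_zero]
        apply Real.exp_le_exp.2
        positivity
      have hmax : max ((η (Set.Icc (-(m:ℝ)) (-(m:ℝ) + 1))).toReal) 1
          ≤ max C 1 * Real.exp ((ε/2) * (m:ℝ)^2) := by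
        apply max_le
        · exact le_trans hb (mul_le_mul_of_nonneg_right (le_max_left _ _)
            (Real.exp_nonneg _))
        · calc (1:ℝ) ≤ max C 1 := le_max_right _ _
            _ = max C 1 * 1 := (mul_one _).symm
            _ ≤ max C 1 * Real.exp ((ε/2) * (m:ℝ)^2) := by
                apply mul_le_mul_of_nonneg_left hexp1
                exact le_trans zero_le_one (le_max_right _ _)
      have hmaxpos : (0:ℝ) < max ((η (Set.Icc (-(m:ℝ)) (-(m:ℝ) + 1))).toReal) 1 := by
        positivity
      have hlog : Real.log (max ((η (Set.Icc (-(m:ℝ)) (-(m:ℝ) + 1))).toReal) 1)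
          ≤ Real.log (max C 1) + (ε/2) * (m:ℝ)^2 := by
        calc Real.log (max ((η (Set.Icc (-(m:ℝ)) (-(m:ℝ) + 1))).toReal) 1)
            ≤ Real.log (max C 1 * Real.exp ((ε/2) * (m:ℝ)^2)) :=
              Real.log_le_log hmaxpos hmax
          _ = Real.log (max C 1) + (ε/2) * (m:ℝ)^2 := by
              rw [Real.log_mul (by positivity) (Real.exp_ne_zero _), Real.log_exp]
      have hsmall : Real.log (max C 1) / (m:ℝ)^2 < ε / 2 := by
        rw [div_lt_iff₀ hmpos]
        have hmsq : (m:ℝ) ≤ (m:ℝ)^2 := by nlinarith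
        have : 2 * Real.log (max C 1) / ε < (m:ℝ) := lt_trans hM₀ hmM
        rw [div_lt_iff₀ hε] at this
        nlinarith
      calc (1 / (m:ℝ)^2) * Real.log (max ((η (Set.Icc (-(m:ℝ)) (-(m:ℝ) + 1))).toReal) 1)
          ≤ (1 / (m:ℝ)^2) * (Real.log (max C 1) + (ε/2) * (m:ℝ)^2) := by
            apply mul_le_mul_of_nonneg_left hlog (by positivity)
        _ = Real.log (max C 1) / (m:ℝ)^2 + ε/2 := by field_simp
        _ < ε/2 + ε/2 := by linarith
        _ = ε := by ring

end
end
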